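/- Let q be an odd prime power with q ≡ 1 (mod 3), let f ∈ 𝔽_q[T] be monic of degree n ≥ 1, and let m ≥ 1 be an integer. If 3 ∣ n, then Σ_{h ∈ M_{q,m}} χ_f(h) = (q^m/|f|_q)·[ G_q(0,f) + (q−1)·Σ_{V ∈ M_{q,≤n−m−2}} G_q(V,f) − Σ_{V ∈ M_{q,n−m−1}} G_q(V,f) ]. If 3 ∤ n, then Σ_{h ∈ M_{q,m}} χ_f(h) = (q^{m+1/2}/|f|_q) · conj(ε(χ_f)) · Σ_{V ∈ M_{q,n−m−1}} G_q(V,f), where conj denotes complex conjugation (sums over M_{q,k} and M_{q,≤k} with k < 0 are empty). -/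

import Mathlib

open scoped Classical
open Polynomial

namespace CubicLF

lemma finite_degreeLT (Fq : Type) [Field Fq] [Fintype Fq] (n : ℕ) :
    {f : Polynomial Fq | f.degree < (n : ℕ)}.Finite := by
  haveI : Finite (Polynomial.degreeLT Fq n) :=
    Finite.of_equiv _ (Polynomial.degreeLTEquiv Fq n).toEquiv.symm
  have h1 : {f : Polynomial Fq | f.degree < (n : ℕ)} =
      (Polynomial.degreeLT Fq n : Set (Polynomial Fq)) := by
    ext f
    simp [Polynomial.mem_degreeLT]
  rw [h1]
  exact Set.toFinite _

/-- The residues modulo `h`: all polynomials of degree smaller than `deg h`. -/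
noncomputable def residues (Fq : Type) [Field Fq] [Fintype Fq] (h : Polynomial Fq) :
    Finset (Polynomial Fq) :=
  (finite_degreeLT Fq h.natDegree).toFinset

lemma finite_monicDeg (Fq : Type) [Field Fq] [Fintype Fq] (n : ℕ) :
    {f : Polynomial Fq | f.Monic ∧ f.natDegree = n}.Finite := by
  apply (finite_degreeLT Fq (n + 1)).subset
  rintro f ⟨hm, rfl⟩
  simp only [Set.mem_setOf_eq]
  rw [Polynomial.degree_eq_natDegree hm.ne_zero]
  exact_mod_cast Nat.lt_succ_self _

/-- The monic polynomials of degree `n`, as a finite set. -/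
noncomputable def Mdeg (Fq : Type) [Field Fq] [Fintype Fq] (n : ℕ) : Finset (Polynomial Fq) :=
  (finite_monicDeg Fq n).toFinset

lemma finite_monicDegLE (Fq : Type) [Field Fq] [Fintype Fq] (n : ℕ) :
    {f : Polynomial Fq | f.Monic ∧ f.natDegree ≤ n}.Finite := by
  apply (finite_degreeLT Fq (n + 1)).subset
  rintro f ⟨hm, hle⟩
  simp only [Set.mem_setOf_eq]
  rw [Polynomial.degree_eq_natDegree hm.ne_zero]
  exact_mod_cast Nat.lt_succ_of_le hle

/-- The monic polynomials of degree at most `n`, as a finite set. -/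
noncomputable def MdegLE (Fq : Type) [Field Fq] [Fintype Fq] (n : ℕ) : Finset (Polynomial Fq) :=
  (finite_monicDegLE Fq n).toFinset

/-- The monic polynomials of degree `k` for an integer `k` (empty for `k < 0`). -/
noncomputable def MdegZ (Fq : Type) [Field Fq] [Fintype Fq] (k : ℤ) : Finset (Polynomial Fq) :=
  if 0 ≤ k then Mdeg Fq k.toNat else ∅

/-- The monic polynomials of degree at most `k`, for an integer `k` (empty for `k < 0`). -/
noncomputable def MdegLEZ (Fq : Type) [Field Fq] [Fintype Fq] (k : ℤ) : Finset (Polynomial Fq) :=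
  if 0 ≤ k then MdegLE Fq k.toNat else ∅

lemma finite_sqfMonicDeg (Fq : Type) [Field Fq] [Fintype Fq] (n : ℕ) :
    {f : Polynomial Fq | f.Monic ∧ Squarefree f ∧ f.natDegree = n}.Finite :=
  (finite_monicDeg Fq n).subset (by rintro f ⟨h1, _, h3⟩; exact ⟨h1, h3⟩)

/-- The monic squarefree polynomials of degree `n`, as a finite set. -/
noncomputable def Hdeg (Fq : Type) [Field Fq] [Fintype Fq] (n : ℕ) : Finset (Polynomial Fq) :=
  (finite_sqfMonicDeg Fq n).toFinset

lemma finite_primeDiv (Fq : Type) [Field Fq] [Fintype Fq] (f : Polynomial Fq) (hf : f ≠ 0) :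
    {P : Polynomial Fq | P.Monic ∧ Irreducible P ∧ P ∣ f}.Finite := by
  apply (finite_monicDegLE Fq f.natDegree).subset
  rintro P ⟨h1, _, h3⟩
  exact ⟨h1, Polynomial.natDegree_le_of_dvd h3 hf⟩

/-- The monic irreducible divisors of `f`, as a finite set. -/
noncomputable def primeDiv (Fq : Type) [Field Fq] [Fintype Fq] (f : Polynomial Fq) :
    Finset (Polynomial Fq) :=
  if hf : f = 0 then ∅ else (finite_primeDiv Fq f hf).toFinset

lemma finite_monicDvd (Fq : Type) [Field Fq] [Fintype Fq] (f : Polynomial Fq) (hf : f ≠ 0) :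
    {a : Polynomial Fq | a.Monic ∧ a ∣ f}.Finite := by
  apply (finite_monicDegLE Fq f.natDegree).subset
  rintro a ⟨h1, h2⟩
  exact ⟨h1, Polynomial.natDegree_le_of_dvd h2 hf⟩

/-- The monic divisors of `f`, as a finite set. -/
noncomputable def monicDvd (Fq : Type) [Field Fq] [Fintype Fq] (f : Polynomial Fq) :
    Finset (Polynomial Fq) :=
  if hf : f = 0 then ∅ else (finite_monicDvd Fq f hf).toFinset

/-- The Möbius function of 𝔽_q[T]. -/
noncomputable def muP (Fq : Type) [Field Fq] [Fintype Fq] (f : Polynomial Fq) : ℤ :=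
  if Squarefree f then (-1) ^ (primeDiv Fq f).card else 0

/-- The Euler phi function of 𝔽_q[T]. -/
noncomputable def phiPoly (Fq : Type) [Field Fq] (f : Polynomial Fq) : ℕ :=
  Nat.card ((Polynomial Fq ⧸ Ideal.span {f})ˣ)

/-- The monic gcd of two polynomials. -/
noncomputable def mgcd (Fq : Type) [Field Fq] (a b : Polynomial Fq) : Polynomial Fq :=
  Polynomial.C ((EuclideanDomain.gcd a b).leadingCoeff)⁻¹ * EuclideanDomain.gcd a b

/-- A Dirichlet character of 𝔽_q[T]: a homomorphism `(𝔽_q[T]/(m))^× → ℂ^×` extended to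
`𝔽_q[T]` by periodicity on elements coprime to `m` and by `0` on the others. -/
structure DChar (Fq : Type) [Field Fq] where
  modulus : Polynomial Fq
  monic_modulus : modulus.Monic
  toFun : Polynomial Fq → ℂ
  map_one : toFun 1 = 1
  map_mul : ∀ a b : Polynomial Fq, toFun (a * b) = toFun a * toFun b
  periodic : ∀ a b : Polynomial Fq, modulus ∣ a - b → toFun a = toFun b
  eq_zero_iff : ∀ a : Polynomial Fq, toFun a = 0 ↔ ¬ IsCoprime a modulus

/-- `h` is a (monic) period of the Dirichlet character `χ`. -/
def IsPeriod {Fq : Type} [Field Fq] (χ : DChar Fq) (h : Polynomial Fq) : Prop :=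
  h.Monic ∧ ∀ a b : Polynomial Fq, IsCoprime a χ.modulus → IsCoprime b χ.modulus →
    h ∣ a - b → χ.toFun a = χ.toFun b

/-- A Dirichlet character is primitive when its conductor (the monic period of smallest
degree) is its modulus. -/
def IsPrimitiveChar {Fq : Type} [Field Fq] (χ : DChar Fq) : Prop :=
  ∀ h : Polynomial Fq, IsPeriod χ h → χ.modulus.natDegree ≤ h.natDegree

/-- A Dirichlet character is cubic when `χ³` is principal but `χ` is not. -/
def IsCubicChar {Fq : Type} [Field Fq] (χ : DChar Fq) : Prop :=
  (∀ a : Polynomial Fq, IsCoprime a χ.modulus → χ.toFun a ^ 3 = 1) ∧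
    ¬ ∀ a : Polynomial Fq, IsCoprime a χ.modulus → χ.toFun a = 1

/-- A Dirichlet character is even when it is trivial on the constants 𝔽_q^×. -/
def IsEvenChar {Fq : Type} [Field Fq] (χ : DChar Fq) : Prop :=
  ∀ c : Fq, c ≠ 0 → χ.toFun (Polynomial.C c) = 1

/-- A Dirichlet character is odd when it is not even. -/
def IsOddChar {Fq : Type} [Field Fq] (χ : DChar Fq) : Prop := ¬ IsEvenChar χ

/-- The genus of a Dirichlet character of conductor `h`:  `deg h - 2` if even,
`deg h - 1` if odd. -/
noncomputable def genus {Fq : Type} [Field Fq] (χ : DChar Fq) : ℕ :=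
  if IsEvenChar χ then χ.modulus.natDegree - 2 else χ.modulus.natDegree - 1

/-- The central value `L_q(1/2,χ) = Σ_{f ∈ M_{q, ≤ deg h - 1}} χ(f) q^{-deg f/2}`. -/
noncomputable def Lhalf (Fq : Type) [Field Fq] [Fintype Fq] (χ : DChar Fq) : ℂ :=
  ∑ f ∈ MdegLE Fq (χ.modulus.natDegree - 1),
    χ.toFun f / (Real.sqrt (Fintype.card Fq : ℝ) : ℂ) ^ f.natDegree

/-- The zeta function `ζ_q(s) = (1 - q^{1-s})⁻¹`. -/
noncomputable def zetaQ (Fq : Type) [Fintype Fq] (s : ℝ) : ℝ :=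
  (1 - (Fintype.card Fq : ℝ) ^ ((1 : ℝ) - s))⁻¹

/-- The primitive cube root of unity `e^{2πi/3}` in ℂ. -/
noncomputable def omega3 : ℂ := Complex.exp (2 * Real.pi * Complex.I / 3)

/-- The cubic character `χ₃` of 𝔽_q^×, relative to the choice `ζ = Ω(e^{2πi/3})` of a
primitive cube root of unity of 𝔽_q:  `χ₃(α) = Ω⁻¹(α^{(q-1)/3})`. -/
noncomputable def chi3 (Fq : Type) [Field Fq] [Fintype Fq] (ζ : Fq) (α : Fq) : ℂ :=
  if α ^ ((Fintype.card Fq - 1) / 3) = 1 then 1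
  else if α ^ ((Fintype.card Fq - 1) / 3) = ζ then omega3
  else omega3 ^ 2

/-- The cubic residue symbol `χ_P` for `P` a monic irreducible polynomial, relative to the
choice `ζ = Ω(e^{2πi/3})` of a primitive cube root of unity of 𝔽_q. -/
noncomputable def cubicSymP (Fq : Type) [Field Fq] [Fintype Fq] (ζ : Fq) (P a : Polynomial Fq) :
    ℂ :=
  if P ∣ a then 0
  else if P ∣ (a ^ ((Fintype.card Fq ^ P.natDegree - 1) / 3) - 1) then 1
  else if P ∣ (a ^ ((Fintype.card Fq ^ P.natDegree - 1) / 3) - Polynomial.C ζ) then omega3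
  else omega3 ^ 2

/-- The cubic residue symbol `χ_F = Π χ_{P_i}^{e_i}` for `F = Π P_i^{e_i}` monic. -/
noncomputable def cubicSym (Fq : Type) [Field Fq] [Fintype Fq] (ζ : Fq) (F a : Polynomial Fq) :
    ℂ :=
  ((UniqueFactorizationMonoid.normalizedFactors F).map (fun P => cubicSymP Fq ζ P a)).prod

/-- The standard additive character `x ↦ exp(2πi Tr_{𝔽_q/𝔽_p}(x)/p)` of 𝔽_q. -/
noncomputable def stdChar (Fq : Type) [Field Fq] [Fintype Fq] (p : ℕ) [Algebra (ZMod p) Fq]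
    (x : Fq) : ℂ :=
  Complex.exp (2 * Real.pi * Complex.I * ((Algebra.trace (ZMod p) Fq x).val : ℂ) / p)

/-- `e_q(g/h)`, i.e. the standard additive character evaluated at the coefficient of `T⁻¹`
in the expansion of `g/h` in `𝔽_q((1/T))`; this coefficient equals the coefficient of
`T^{deg h - 1}` in `g mod h`. -/
noncomputable def eqF (Fq : Type) [Field Fq] [Fintype Fq] (p : ℕ) [Algebra (ZMod p) Fq]
    (g h : Polynomial Fq) : ℂ :=
  stdChar Fq p ((g %ₘ h).coeff (h.natDegree - 1))

/-- The generalized cubic Gauss sum `G_q(V,f) = Σ_{u mod f} χ_f(u) e_q(uV/f)`. -/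
noncomputable def Gq (Fq : Type) [Field Fq] [Fintype Fq] (ζ : Fq) (p : ℕ) [Algebra (ZMod p) Fq]
    (V f : Polynomial Fq) : ℂ :=
  ∑ u ∈ residues Fq f, cubicSym Fq ζ f u * eqF Fq p (u * V) f

/-- The Gauss sum `G(χ) = Σ_{a mod h} χ(a) e_q(a/h)` of a Dirichlet character of modulus `h`. -/
noncomputable def bigGauss (Fq : Type) [Field Fq] [Fintype Fq] (p : ℕ) [Algebra (ZMod p) Fq]
    (χ : DChar Fq) : ℂ :=
  ∑ a ∈ residues Fq χ.modulus, χ.toFun a * eqF Fq p a χ.modulus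

/-- `τ(χ) = Σ_{c ∈ 𝔽_q^×} χ(c) exp(2πi Tr(c)/p)`, the Gauss sum of the restriction of a
Dirichlet character to the constants. -/
noncomputable def tauD (Fq : Type) [Field Fq] [Fintype Fq] (p : ℕ) [Algebra (ZMod p) Fq]
    (χ : DChar Fq) : ℂ :=
  ∑ c : Fqˣ, χ.toFun (Polynomial.C (c : Fq)) * stdChar Fq p (c : Fq)

/-- `τ(χ₃) = Σ_{c ∈ 𝔽_q^×} χ₃(c) exp(2πi Tr(c)/p)`. -/
noncomputable def tauChi3 (Fq : Type) [Field Fq] [Fintype Fq] (ζ : Fq) (p : ℕ)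
    [Algebra (ZMod p) Fq] : ℂ :=
  ∑ c : Fqˣ, chi3 Fq ζ (c : Fq) * stdChar Fq p (c : Fq)

/-- The generating series `Ψ_q(f,X) = Σ_{F monic} G_q(f,F) X^{deg F}` as a formal power
series. -/
noncomputable def PsiS (Fq : Type) [Field Fq] [Fintype Fq] (ζ : Fq) (p : ℕ)
    [Algebra (ZMod p) Fq] (f : Polynomial Fq) : PowerSeries ℂ :=
  PowerSeries.mk fun n => ∑ F ∈ Mdeg Fq n, Gq Fq ζ p f F

/-- The generating series `Ψ̃_q(f,X) = Σ_{F monic, (F,f)=1} G_q(f,F) X^{deg F}` as a formal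
power series. -/
noncomputable def PsiTildeS (Fq : Type) [Field Fq] [Fintype Fq] (ζ : Fq) (p : ℕ)
    [Algebra (ZMod p) Fq] (f : Polynomial Fq) : PowerSeries ℂ :=
  PowerSeries.mk fun n => ∑ F ∈ Mdeg Fq n, if IsCoprime F f then Gq Fq ζ p f F else 0



/-! ### Auxiliary development -/

section Aux

variable (Fq : Type) [Field Fq] [Fintype Fq]

/-- Polynomials of degree `< k` as a finset. -/
noncomputable def degLT (k : ℕ) : Finset (Polynomial Fq) := (finite_degreeLT Fq k).toFinset

lemma mem_degLT {k : ℕ} {g : Polynomial Fq} : g ∈ degLT Fq k ↔ g.degree < (k : ℕ) := by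
  simp [degLT, Set.Finite.mem_toFinset]

lemma residues_eq (f : Polynomial Fq) : residues Fq f = degLT Fq f.natDegree := rfl

lemma card_degLT (k : ℕ) : (degLT Fq k).card = Fintype.card Fq ^ k := by
  classical
  have h1 : {f : Polynomial Fq | f.degree < (k : ℕ)} =
      (Polynomial.degreeLT Fq k : Set (Polynomial Fq)) := by
    ext f; simp [Polynomial.mem_degreeLT]
  rw [degLT, ← Nat.card_eq_card_finite_toFinset (finite_degreeLT Fq k)]
  have e : {f : Polynomial Fq | f.degree < (k : ℕ)} ≃ (Fin k → Fq) :=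
    (Equiv.setCongr h1).trans (Polynomial.degreeLTEquiv Fq k).toEquiv
  rw [Nat.card_congr e, Nat.card_eq_fintype_card, Fintype.card_fun]
  simp

section StdChar

variable (p : ℕ) [Fact p.Prime] [Algebra (ZMod p) Fq]

lemma stdChar_apply (x : Fq) :
    stdChar Fq p x =
      Complex.exp (2 * Real.pi * Complex.I / p) ^ (Algebra.trace (ZMod p) Fq x).val := by
  rw [stdChar, ← Complex.exp_nat_mul]
  congr 1
  ring

lemma zetaP_pow : Complex.exp (2 * Real.pi * Complex.I / p) ^ p = 1 := by
  have hp0 : (p : ℂ) ≠ 0 := by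
    exact_mod_cast (Fact.out : p.Prime).ne_zero
  rw [← Complex.exp_nat_mul]
  rw [show (p : ℂ) * (2 * Real.pi * Complex.I / p) = 2 * Real.pi * Complex.I by
    field_simp]
  exact Complex.exp_two_pi_mul_I

lemma stdChar_zero : stdChar Fq p 0 = 1 := by
  simp [stdChar]

lemma stdChar_add (x y : Fq) :
    stdChar Fq p (x + y) = stdChar Fq p x * stdChar Fq p y := by
  haveI : NeZero p := ⟨(Fact.out : p.Prime).ne_zero⟩
  rw [stdChar_apply, stdChar_apply, stdChar_apply, ← pow_add, map_add, ZMod.val_add]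
  set ζ := Complex.exp (2 * Real.pi * Complex.I / p) with hζ
  set a := (Algebra.trace (ZMod p) Fq x).val
  set b := (Algebra.trace (ZMod p) Fq y).val
  conv_rhs => rw [← Nat.div_add_mod (a + b) p]
  rw [pow_add, pow_mul, zetaP_pow, one_pow, one_mul]

lemma stdChar_ne_one {x : Fq} (hx : Algebra.trace (ZMod p) Fq x ≠ 0) :
    stdChar Fq p x ≠ 1 := by
  haveI : NeZero p := ⟨(Fact.out : p.Prime).ne_zero⟩
  intro h
  rw [stdChar] at h
  set v := (Algebra.trace (ZMod p) Fq x).val with hv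
  have hv0 : v ≠ 0 := by
    simpa [hv, ZMod.val_eq_zero] using hx
  have hvp : v < p := ZMod.val_lt _
  obtain ⟨k, hk⟩ := Complex.exp_eq_one_iff.mp h
  have hπ : (2 * (Real.pi : ℂ) * Complex.I) ≠ 0 := by
    simp [Real.pi_ne_zero, Complex.I_ne_zero]
  have hp0 : (p : ℂ) ≠ 0 := by
    exact_mod_cast (Fact.out : p.Prime).ne_zero
  have h2 : (v : ℂ) = (k : ℂ) * p := by
    apply mul_left_cancel₀ hπ
    field_simp at hk
    linear_combination (2 * (Real.pi : ℂ) * Complex.I) * hk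
  have h3 : (v : ℤ) = k * p := by exact_mod_cast h2
  have hdvd : (p : ℤ) ∣ (v : ℤ) := ⟨k, by linarith [h3]⟩
  have := Int.le_of_dvd (by exact_mod_cast Nat.pos_of_ne_zero hv0) hdvd
  omega

lemma stdChar_neg_mul (x : Fq) : stdChar Fq p (-x) * stdChar Fq p x = 1 := by
  rw [← stdChar_add]
  simp [stdChar_zero]

lemma abs_stdChar (x : Fq) : ‖stdChar Fq p x‖ = 1 := by
  rw [stdChar]
  rw [show (2 * (Real.pi : ℂ) * Complex.I * ((Algebra.trace (ZMod p) Fq x).val : ℂ) / p)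
      = ((2 * Real.pi * (Algebra.trace (ZMod p) Fq x).val / p : ℝ) : ℂ) * Complex.I by
    push_cast; ring]
  rw [Complex.norm_exp]
  simp

lemma conj_stdChar (x : Fq) :
    (starRingEnd ℂ) (stdChar Fq p x) = stdChar Fq p (-x) := by
  have h1 : stdChar Fq p (-x) = (stdChar Fq p x)⁻¹ :=
    eq_inv_of_mul_eq_one_left (stdChar_neg_mul Fq p x)
  rw [h1, Complex.inv_def]
  simp [Complex.normSq_eq_norm_sq, abs_stdChar]

lemma exists_trace_ne (hp : p = ringChar Fq) {y : Fq} (hy : y ≠ 0) :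
    ∃ b : Fq, Algebra.trace (ZMod p) Fq (y * b) ≠ 0 := by
  subst hp
  exact FiniteField.trace_to_zmod_nondegenerate Fq hy

lemma sum_stdChar (hp : p = ringChar Fq) : ∑ x : Fq, stdChar Fq p x = 0 := by
  obtain ⟨b, hb⟩ := exists_trace_ne Fq p hp (one_ne_zero (α := Fq))
  rw [one_mul] at hb
  have hne : stdChar Fq p b ≠ 1 := stdChar_ne_one Fq p hb
  have h : ∑ x : Fq, stdChar Fq p x = stdChar Fq p b * ∑ x : Fq, stdChar Fq p x := by
    rw [Finset.mul_sum]
    refine Fintype.sum_equiv (Equiv.subRight b) _ _ fun x => ?_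
    show stdChar Fq p x = stdChar Fq p b * stdChar Fq p (x - b)
    rw [← stdChar_add]
    congr 1
    ring
  have h2 : (1 - stdChar Fq p b) * ∑ x : Fq, stdChar Fq p x = 0 := by
    rw [sub_mul, one_mul]
    linear_combination h
  rcases mul_eq_zero.mp h2 with h3 | h3
  · exact absurd (by linear_combination -h3) hne
  · exact h3

lemma sum_stdChar_mul (hp : p = ringChar Fq) {c : Fq} (hc : c ≠ 0) :
    ∑ a : Fq, stdChar Fq p (a * c) = 0 := by
  rw [← sum_stdChar Fq p hp]
  exact Fintype.sum_equiv (Equiv.mulRight₀ c hc) _ _ fun x => rfl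

end StdChar

end Aux

section Aux2
set_option linter.unusedSectionVars false

variable (Fq : Type) [Field Fq] [Fintype Fq]

/-- The coefficient of `T^(deg f - 1)` of `g mod f`. -/
noncomputable def Lc (f g : Polynomial Fq) : Fq := (g %ₘ f).coeff (f.natDegree - 1)

variable (p : ℕ) [Fact p.Prime] [Algebra (ZMod p) Fq]

lemma eqF_eq (g f : Polynomial Fq) : eqF Fq p g f = stdChar Fq p (Lc Fq f g) := rfl

variable {Fq}

lemma Lc_add (f a b : Polynomial Fq) : Lc Fq f (a + b) = Lc Fq f a + Lc Fq f b := by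
  rw [Lc, Lc, Lc, Polynomial.add_modByMonic, Polynomial.coeff_add]

lemma Lc_C_mul (f a : Polynomial Fq) (c : Fq) : Lc Fq f (Polynomial.C c * a) = c * Lc Fq f a := by
  rw [Lc, Lc, ← Polynomial.smul_eq_C_mul, Polynomial.smul_modByMonic, Polynomial.coeff_smul,
    smul_eq_mul]

lemma Lc_zero (f : Polynomial Fq) : Lc Fq f 0 = 0 := by
  simp [Lc]

lemma Lc_of_dvd {f : Polynomial Fq} (hf : f.Monic) {g : Polynomial Fq} (h : f ∣ g) :
    Lc Fq f g = 0 := by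
  rw [Lc, (Polynomial.modByMonic_eq_zero_iff_dvd hf).mpr h, Polynomial.coeff_zero]

lemma Lc_of_degree_lt {f : Polynomial Fq} (hf : f.Monic) {g : Polynomial Fq}
    (h : g.degree < f.degree) : Lc Fq f g = g.coeff (f.natDegree - 1) := by
  rw [Lc, (Polynomial.modByMonic_eq_self_iff hf).mpr h]

lemma Lc_add_dvd {f : Polynomial Fq} (hf : f.Monic) {g t : Polynomial Fq} (ht : f ∣ t) :
    Lc Fq f (g + t) = Lc Fq f g := by
  rw [Lc_add, Lc_of_dvd hf ht, add_zero]

/-- Key vanishing: additive character sums over `degLT k` vanish if the linear functional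
is somewhere nonzero. -/
lemma sum_stdChar_Lc_eq_zero (hp : p = ringChar Fq) {f : Polynomial Fq} (hf : f.Monic) (k : ℕ) (W : Polynomial Fq)
    (g0 : Polynomial Fq) (hg0 : g0.degree < (k : ℕ)) (hne : Lc Fq f (g0 * W) ≠ 0) :
    ∑ g ∈ degLT Fq k, stdChar Fq p (Lc Fq f (g * W)) = 0 := by
  -- first rescale g0 so that the trace is nonzero
  obtain ⟨b, hb⟩ := exists_trace_ne Fq p hp hne
  have hchar : stdChar Fq p (Lc Fq f ((Polynomial.C b * g0) * W)) ≠ 1 := by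
    rw [mul_assoc, Lc_C_mul]
    refine stdChar_ne_one Fq p ?_
    rw [mul_comm]
    exact hb
  set g1 := Polynomial.C b * g0 with hg1
  have hg1lt : g1.degree < (k : ℕ) := by
    rcases eq_or_ne b 0 with hb0 | hb0
    · simp only [hg1, hb0, Polynomial.C_0, zero_mul, Polynomial.degree_zero]
      exact WithBot.bot_lt_coe _
    · rwa [hg1, Polynomial.degree_C_mul hb0]
  -- now the shift argument
  set S := ∑ g ∈ degLT Fq k, stdChar Fq p (Lc Fq f (g * W)) with hS
  have hshift : S = stdChar Fq p (Lc Fq f (g1 * W)) * S := by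
    rw [hS, Finset.mul_sum]
    refine Finset.sum_nbij' (fun g => g - g1) (fun g => g + g1) ?_ ?_ ?_ ?_ ?_
    · intro a ha
      rw [mem_degLT] at ha ⊢
      exact lt_of_le_of_lt (Polynomial.degree_sub_le a g1) (max_lt ha hg1lt)
    · intro a ha
      rw [mem_degLT] at ha ⊢
      exact lt_of_le_of_lt (Polynomial.degree_add_le a g1) (max_lt ha hg1lt)
    · intro a _; ring
    · intro a _; ring
    · intro g _
      rw [← stdChar_add, ← Lc_add]
      congr 2
      ring
  have h2 : (1 - stdChar Fq p (Lc Fq f (g1 * W))) * S = 0 := by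
    rw [sub_mul, one_mul]
    linear_combination hshift
  rcases mul_eq_zero.mp h2 with h3 | h3
  · exact absurd (by linear_combination -h3) hchar
  · exact h3

/-- If the linear functional vanishes identically on `degLT k`, the sum is `q^k`. -/
lemma sum_stdChar_Lc_eq_card {f : Polynomial Fq} (k : ℕ) (W : Polynomial Fq)
    (h : ∀ g : Polynomial Fq, g.degree < (k : ℕ) → Lc Fq f (g * W) = 0) :
    ∑ g ∈ degLT Fq k, stdChar Fq p (Lc Fq f (g * W)) = (Fintype.card Fq : ℂ) ^ k := by
  rw [Finset.sum_congr rfl fun g hg => by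
    rw [h g ((mem_degLT Fq).mp hg), stdChar_zero]]
  rw [Finset.sum_const, card_degLT, nsmul_eq_mul]
  push_cast
  ring

end Aux2

section Aux3
set_option linter.unusedSectionVars false

variable {Fq : Type} [Field Fq] [Fintype Fq] (p : ℕ) [Fact p.Prime] [Algebra (ZMod p) Fq]

lemma mem_Mdeg {d : ℕ} {h : Polynomial Fq} : h ∈ Mdeg Fq d ↔ h.Monic ∧ h.natDegree = d := by
  simp [Mdeg, Set.Finite.mem_toFinset]

lemma mem_MdegLE {d : ℕ} {h : Polynomial Fq} :
    h ∈ MdegLE Fq d ↔ h.Monic ∧ h.natDegree ≤ d := by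
  simp [MdegLE, Set.Finite.mem_toFinset]

/-- Writing a sum over monic polynomials of degree `m` as a sum over `degLT m`. -/
lemma sum_Mdeg_eq (m : ℕ) (F : Polynomial Fq → ℂ) :
    ∑ h ∈ Mdeg Fq m, F h = ∑ g ∈ degLT Fq m, F (Polynomial.X ^ m + g) := by
  refine Finset.sum_nbij' (fun h => h - Polynomial.X ^ m) (fun g => Polynomial.X ^ m + g)
    ?_ ?_ ?_ ?_ ?_
  · intro h hh
    rw [mem_Mdeg] at hh
    rw [mem_degLT]
    have hd : h.degree = (Polynomial.X ^ m : Polynomial Fq).degree := by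
      rw [Polynomial.degree_X_pow, Polynomial.degree_eq_natDegree hh.1.ne_zero, hh.2]
    have := Polynomial.degree_sub_lt hd hh.1.ne_zero
      (by rw [Polynomial.monic_X_pow m, hh.1])
    rwa [Polynomial.degree_eq_natDegree hh.1.ne_zero, hh.2] at this
  · intro g hg
    rw [mem_degLT] at hg
    rw [mem_Mdeg]
    have hg' : g.degree < ((Polynomial.X : Polynomial Fq) ^ m).degree := by
      rwa [Polynomial.degree_X_pow]
    constructor
    · exact Polynomial.monic_X_pow_add hg
    · have hdeg : (Polynomial.X ^ m + g : Polynomial Fq).degree = (m : ℕ) := by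
        rw [Polynomial.degree_add_eq_left_of_degree_lt hg', Polynomial.degree_X_pow]
      exact Polynomial.natDegree_eq_of_degree_eq_some hdeg
  · intro a _; ring
  · intro a _; ring
  · intro h _
    congr 1
    ring

lemma card_Mdeg (m : ℕ) : ((Mdeg Fq m).card : ℂ) = (Fintype.card Fq : ℂ) ^ m := by
  have h := sum_Mdeg_eq (Fq := Fq) m (fun _ => (1 : ℂ))
  simp only [Finset.sum_const, nsmul_eq_mul, mul_one] at h
  rw [h, card_degLT]
  push_cast
  ring

/-- Main coefficient computation: if `deg V < n - m` and `deg g ≤ m`,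
then `Lc f (g V) = g_m V_{n-m-1}`. -/
lemma Lc_mul_of_degree_lt {f : Polynomial Fq} (hf : f.Monic) {n m : ℕ} (hn : n = f.natDegree)
    (hmn : m < n) {V : Polynomial Fq} (hV : V.degree < ((n - m : ℕ) : WithBot ℕ))
    {g : Polynomial Fq} (hg : g.degree ≤ (m : ℕ)) :
    Lc Fq f (g * V) = g.coeff m * V.coeff (n - m - 1) := by
  rcases eq_or_ne V 0 with rfl | hV0
  · simp [Lc_zero]
  have hVd : V.natDegree < n - m := (Polynomial.natDegree_lt_iff_degree_lt hV0).mpr hV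
  have hVdeg : V.degree ≤ ((n - m - 1 : ℕ) : WithBot ℕ) := by
    rw [Polynomial.degree_eq_natDegree hV0]
    exact_mod_cast (by omega : V.natDegree ≤ n - m - 1)
  have hdeg : (g * V).degree ≤ ((n - 1 : ℕ) : WithBot ℕ) := by
    refine le_trans (Polynomial.degree_mul_le g V) (le_trans (add_le_add hg hVdeg) ?_)
    exact_mod_cast (by omega : m + (n - m - 1) ≤ n - 1)
  have hlt : (g * V).degree < f.degree := by
    refine lt_of_le_of_lt hdeg ?_
    rw [Polynomial.degree_eq_natDegree hf.ne_zero, ← hn]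
    exact_mod_cast (by omega : n - 1 < n)
  rw [Lc_of_degree_lt hf hlt, ← hn, Polynomial.coeff_mul]
  rw [Finset.sum_eq_single_of_mem (m, n - 1 - m)]
  · rw [show n - 1 - m = n - m - 1 by omega]
  · rw [Finset.HasAntidiagonal.mem_antidiagonal]
    omega
  · rintro ⟨i, j⟩ hmem hne
    rw [Finset.HasAntidiagonal.mem_antidiagonal] at hmem
    rcases lt_trichotomy i m with hi | heq | hi
    · have : V.natDegree < j := by omega
      rw [Polynomial.coeff_eq_zero_of_natDegree_lt this, mul_zero]
    · exfalso
      apply hne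
      simp only [Prod.mk.injEq]
      exact ⟨heq, by omega⟩
    · rw [Polynomial.coeff_eq_zero_of_degree_lt
        (lt_of_le_of_lt hg (by exact_mod_cast hi)), zero_mul]

lemma Lc_X_pow_mul {f : Polynomial Fq} (hf : f.Monic) {n : ℕ} (hn : n = f.natDegree)
    (hn1 : 1 ≤ n) {V : Polynomial Fq} (hV0 : V ≠ 0) (hVlt : V.natDegree < n) {i : ℕ}
    (hi : i + V.natDegree = n - 1) :
    Lc Fq f (Polynomial.X ^ i * V) = V.leadingCoeff := by
  have hdeg : (Polynomial.X ^ i * V).degree = ((n - 1 : ℕ) : WithBot ℕ) := by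
    rw [Polynomial.degree_mul, Polynomial.degree_X_pow,
      Polynomial.degree_eq_natDegree hV0, ← Nat.cast_add, hi]
  have hlt : (Polynomial.X ^ i * V).degree < f.degree := by
    rw [hdeg, Polynomial.degree_eq_natDegree hf.ne_zero, ← hn]
    exact_mod_cast (by omega : n - 1 < n)
  rw [Lc_of_degree_lt hf hlt, ← hn, show n - 1 = V.natDegree + i by omega,
    Polynomial.coeff_X_pow_mul]
  rfl

/-- Inner sum over monic polynomials, small degree `V` case. -/
lemma inner_small {f : Polynomial Fq} (hf : f.Monic) {n m : ℕ} (hn : n = f.natDegree)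
    (hmn : m < n) {V : Polynomial Fq} (hV : V.degree < ((n - m : ℕ) : WithBot ℕ)) :
    ∑ h ∈ Mdeg Fq m, stdChar Fq p (Lc Fq f (h * V)) =
      (Fintype.card Fq : ℂ) ^ m * stdChar Fq p (V.coeff (n - m - 1)) := by
  have hterm : ∀ h ∈ Mdeg Fq m, stdChar Fq p (Lc Fq f (h * V)) =
      stdChar Fq p (V.coeff (n - m - 1)) := by
    intro h hh
    rw [mem_Mdeg] at hh
    rw [Lc_mul_of_degree_lt hf hn hmn hV
      (by rw [Polynomial.degree_eq_natDegree hh.1.ne_zero, hh.2]),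
      show h.coeff m = 1 by rw [← hh.2]; exact hh.1.coeff_natDegree, one_mul]
  rw [Finset.sum_congr rfl hterm, Finset.sum_const, nsmul_eq_mul, card_Mdeg]

/-- Inner sum over monic polynomials, large degree `V` case: vanishing. -/
lemma inner_zero (hp : p = ringChar Fq) {f : Polynomial Fq} (hf : f.Monic) {n m : ℕ}
    (hn : n = f.natDegree) (hn1 : 1 ≤ n) (hm1 : 1 ≤ m) {V : Polynomial Fq} (hV0 : V ≠ 0)
    (hVlt : V.natDegree < n) (hVge : n - m ≤ V.natDegree) :
    ∑ h ∈ Mdeg Fq m, stdChar Fq p (Lc Fq f (h * V)) = 0 := by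
  rw [sum_Mdeg_eq]
  have hsplit : ∀ g ∈ degLT Fq m, stdChar Fq p (Lc Fq f ((Polynomial.X ^ m + g) * V)) =
      stdChar Fq p (Lc Fq f (Polynomial.X ^ m * V)) * stdChar Fq p (Lc Fq f (g * V)) := by
    intro g _
    rw [← stdChar_add, ← Lc_add]
    congr 2
    ring
  rw [Finset.sum_congr rfl hsplit, ← Finset.mul_sum]
  have hzero : ∑ g ∈ degLT Fq m, stdChar Fq p (Lc Fq f (g * V)) = 0 := by
    refine sum_stdChar_Lc_eq_zero p hp hf m V (Polynomial.X ^ (n - 1 - V.natDegree)) ?_ ?_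
    · rw [Polynomial.degree_X_pow]
      exact_mod_cast (by omega : n - 1 - V.natDegree < m)
    · rw [Lc_X_pow_mul hf hn hn1 hV0 hVlt (Nat.sub_add_cancel (by omega))]
      exact Polynomial.leadingCoeff_ne_zero.mpr hV0
  rw [hzero, mul_zero]

/-- Orthogonality of additive characters on residues. -/
lemma orth (hp : p = ringChar Fq) {f : Polynomial Fq} (hf : f.Monic) (hn1 : 1 ≤ f.natDegree)
    (w : Polynomial Fq) :
    ∑ V ∈ degLT Fq f.natDegree, stdChar Fq p (Lc Fq f (w * V)) =
      if f ∣ w then (Fintype.card Fq : ℂ) ^ f.natDegree else 0 := by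
  by_cases hdvd : f ∣ w
  · rw [if_pos hdvd]
    have : ∀ V ∈ degLT Fq f.natDegree, stdChar Fq p (Lc Fq f (w * V)) = 1 := by
      intro V _
      rw [Lc_of_dvd hf (hdvd.mul_right V), stdChar_zero]
    rw [Finset.sum_congr rfl this, Finset.sum_const, card_degLT, nsmul_eq_mul, mul_one]
    push_cast
    ring
  · rw [if_neg hdvd]
    set w' := w %ₘ f with hw'
    have hw'0 : w' ≠ 0 := fun h =>
      hdvd ((Polynomial.modByMonic_eq_zero_iff_dvd hf).mp h)
    have hw'lt : w'.degree < f.degree := Polynomial.degree_modByMonic_lt w hf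
    have hw'nd : w'.natDegree < f.natDegree := by
      rwa [Polynomial.degree_eq_natDegree hw'0,
        Polynomial.degree_eq_natDegree hf.ne_zero, Nat.cast_lt] at hw'lt
    set c := (w'.leadingCoeff)⁻¹ with hc
    have hc0 : c ≠ 0 := inv_ne_zero (Polynomial.leadingCoeff_ne_zero.mpr hw'0)
    set g0 := Polynomial.C c * Polynomial.X ^ (f.natDegree - 1 - w'.natDegree) with hg0
    have hsum : ∀ V ∈ degLT Fq f.natDegree,
        stdChar Fq p (Lc Fq f (w * V)) = stdChar Fq p (Lc Fq f (V * w)) := by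
      intro V _
      rw [mul_comm]
    rw [Finset.sum_congr rfl hsum]
    refine sum_stdChar_Lc_eq_zero p hp hf f.natDegree w g0 ?_ ?_
    · rw [hg0]
      rcases eq_or_ne c 0 with h | h
      · simp only [h, Polynomial.C_0, zero_mul, Polynomial.degree_zero]
        exact WithBot.bot_lt_coe _
      · rw [Polynomial.degree_C_mul h, Polynomial.degree_X_pow]
        exact_mod_cast (by omega : f.natDegree - 1 - w'.natDegree < f.natDegree)
    · have hkey : g0 * w = g0 * w' + f * (g0 * (w /ₘ f)) := by
        have : w' = w - f * (w /ₘ f) := Polynomial.modByMonic_eq_sub_mul_div w f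
        rw [this]
        ring
      rw [hkey, Lc_add_dvd hf (dvd_mul_right f _)]
      rw [hg0, mul_assoc, Lc_C_mul,
        Lc_X_pow_mul hf rfl hn1 hw'0 hw'nd (Nat.sub_add_cancel (by omega))]
      rw [hc, inv_mul_cancel₀ (Polynomial.leadingCoeff_ne_zero.mpr hw'0)]
      exact one_ne_zero

end Aux3

section Chars
set_option linter.unusedSectionVars false

variable {Fq : Type} [Field Fq] [Fintype Fq]

/-- Distinguished evaluation of cube roots of unity. -/
noncomputable def e3 (ζ x : Fq) : ℂ := if x = 1 then 1 else if x = ζ then omega3 else omega3 ^ 2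

lemma omega3_prim : IsPrimitiveRoot omega3 3 := by
  have h := Complex.isPrimitiveRoot_exp 3 (by norm_num)
  have he : omega3 = Complex.exp (2 * Real.pi * Complex.I / ((3 : ℕ) : ℂ)) := by
    rw [show omega3 = Complex.exp (2 * Real.pi * Complex.I / 3) from rfl]
    norm_num
  rw [he]
  exact h

lemma omega3_pow_three : omega3 ^ 3 = 1 := omega3_prim.pow_eq_one

lemma omega3_ne_one : omega3 ≠ 1 := by
  have := omega3_prim.pow_ne_one_of_pos_of_lt (l := 1) one_ne_zero (by norm_num)
  simpa using this

lemma omega3_sq_ne_one : omega3 ^ 2 ≠ 1 :=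
  omega3_prim.pow_ne_one_of_pos_of_lt (l := 2) two_ne_zero (by norm_num)

lemma abs_omega3 : ‖omega3‖ = 1 := by
  rw [omega3, show (2 * (Real.pi : ℂ) * Complex.I / 3) = ((2 * Real.pi / 3 : ℝ) : ℂ) * Complex.I
    by push_cast; ring, Complex.norm_exp]
  simp

lemma conj_omega3 : (starRingEnd ℂ) omega3 = omega3 ^ 2 := by
  have h1 : omega3 * omega3 ^ 2 = 1 := by
    rw [← pow_succ']
    exact omega3_pow_three
  have h2 : omega3 ^ 2 = omega3⁻¹ := eq_inv_of_mul_eq_one_right h1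
  rw [h2, Complex.inv_def]
  simp [Complex.normSq_eq_norm_sq, abs_omega3]

variable {ζ : Fq} (hζ3 : ζ ^ 3 = 1) (hζ1 : ζ ≠ 1)

lemma mu3_mul {x y : Fq} (hx : x ^ 3 = 1) (hy : y ^ 3 = 1) : (x * y) ^ 3 = 1 := by
  rw [mul_pow, hx, hy, one_mul]

lemma mu3_pow {x : Fq} (hx : x ^ 3 = 1) (k : ℕ) : (x ^ k) ^ 3 = 1 := by
  rw [← pow_mul, mul_comm, pow_mul, hx, one_pow]

lemma e3_one (ζ : Fq) : e3 ζ (1 : Fq) = 1 := by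
  simp [e3]

section ZetaFacts
include hζ3 hζ1

lemma zeta_ne_zero : ζ ≠ 0 := by
  intro h
  rw [h] at hζ3
  simp at hζ3

lemma zeta_sq_ne_one : ζ ^ 2 ≠ 1 := by
  intro h
  apply hζ1
  calc ζ = ζ * ζ ^ 2 * (ζ ^ 2)⁻¹ := by
        field_simp [pow_ne_zero 2 (zeta_ne_zero hζ3 hζ1)]
    _ = 1 := by rw [← pow_succ', hζ3, h]; simp

lemma zeta_sq_ne_zeta : ζ ^ 2 ≠ ζ := by
  intro h
  apply zeta_sq_ne_one hζ3 hζ1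
  have : ζ ^ 2 * ζ = ζ * ζ := by rw [h]
  have h2 : ζ ^ 3 = ζ ^ 2 := by
    rw [← pow_succ] at this
    rw [this, sq]
  rw [hζ3] at h2
  rw [← h2]

lemma one_add_zeta_add_sq : 1 + ζ + ζ ^ 2 = 0 := by
  have h : (ζ - 1) * (ζ ^ 2 + ζ + 1) = 0 := by
    have : ζ ^ 3 - 1 = 0 := by rw [hζ3]; ring
    linear_combination this
  rcases mul_eq_zero.mp h with h1 | h1
  · exact absurd (by linear_combination h1) hζ1
  · linear_combination h1

/-- Membership in the cube roots of unity. -/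
lemma mu3_of_cube {x : Fq} (hx : x ^ 3 = 1) : x = 1 ∨ x = ζ ∨ x = ζ ^ 2 := by
  have h : (x - 1) * ((x - ζ) * (x - ζ ^ 2)) = 0 := by
    have hζs := one_add_zeta_add_sq hζ3 hζ1
    have hx1 : x ^ 3 - 1 = 0 := by rw [hx]; ring
    linear_combination (x - x ^ 2) * hζs + hx1 + (x - 1) * hζ3
  rcases mul_eq_zero.mp h with h1 | h1
  · left; linear_combination h1
  · rcases mul_eq_zero.mp h1 with h2 | h2
    · right; left; linear_combination h2
    · right; right; linear_combination h2

lemma e3_zeta : e3 ζ ζ = omega3 := by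
  rw [e3, if_neg hζ1, if_pos rfl]


lemma e3_zeta_sq : e3 ζ (ζ ^ 2) = omega3 ^ 2 := by
  rw [e3, if_neg (zeta_sq_ne_one hζ3 hζ1), if_neg (zeta_sq_ne_zeta hζ3 hζ1)]

lemma e3_cube_val {x : Fq} (hx : x ^ 3 = 1) :
    e3 ζ x = 1 ∨ e3 ζ x = omega3 ∨ e3 ζ x = omega3 ^ 2 := by
  rcases mu3_of_cube hζ3 hζ1 hx with h | h | h <;> rw [h]
  · left; exact e3_one ζ
  · right; left; exact e3_zeta hζ3 hζ1
  · right; right; exact e3_zeta_sq hζ3 hζ1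

lemma conj_e3 {x : Fq} (hx : x ^ 3 = 1) :
    (starRingEnd ℂ) (e3 ζ x) * e3 ζ x = 1 := by
  rcases e3_cube_val hζ3 hζ1 hx with h | h | h <;> rw [h]
  · simp
  · rw [conj_omega3, ← pow_succ, omega3_pow_three]
  · rw [map_pow, conj_omega3,
      show ((omega3 ^ 2) ^ 2 * omega3 ^ 2 : ℂ) = (omega3 ^ 3) ^ 2 by ring,
      omega3_pow_three, one_pow]

lemma e3_mul {x y : Fq} (hx : x ^ 3 = 1) (hy : y ^ 3 = 1) :
    e3 ζ (x * y) = e3 ζ x * e3 ζ y := by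
  have hω := omega3_pow_three
  rcases mu3_of_cube hζ3 hζ1 hx with h1 | h1 | h1 <;>
    rcases mu3_of_cube hζ3 hζ1 hy with h2 | h2 | h2 <;> rw [h1, h2]
  · rw [one_mul, e3_one]; ring
  · rw [one_mul, e3_one]; ring
  · rw [one_mul, e3_one]; ring
  · rw [mul_one, e3_one]; ring
  · rw [show ζ * ζ = ζ ^ 2 by ring, e3_zeta_sq hζ3 hζ1, e3_zeta hζ3 hζ1, sq]
  · rw [show ζ * ζ ^ 2 = ζ ^ 3 by ring, hζ3, e3_one, e3_zeta hζ3 hζ1, e3_zeta_sq hζ3 hζ1,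
      ← pow_succ', hω]
  · rw [mul_one, e3_one]; ring
  · rw [show ζ ^ 2 * ζ = ζ ^ 3 by ring, hζ3, e3_one, e3_zeta hζ3 hζ1, e3_zeta_sq hζ3 hζ1,
      ← pow_succ, hω]
  · rw [show ζ ^ 2 * ζ ^ 2 = ζ ^ 3 * ζ by ring, hζ3, one_mul, e3_zeta hζ3 hζ1,
      e3_zeta_sq hζ3 hζ1, show (omega3 ^ 2) * (omega3 ^ 2) = omega3 ^ 3 * omega3 by ring, hω,
      one_mul]

lemma e3_pow {x : Fq} (hx : x ^ 3 = 1) (k : ℕ) : e3 ζ (x ^ k) = (e3 ζ x) ^ k := by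
  induction k with
  | zero => simp [e3_one]
  | succ k ih => rw [pow_succ, pow_succ, e3_mul hζ3 hζ1 (mu3_pow hx k) hx, ih]

lemma e3_eq_one_of_dvd {x : Fq} (hx : x ^ 3 = 1) {k : ℕ} (hk : 3 ∣ k) : e3 ζ (x ^ k) = 1 := by
  obtain ⟨t, rfl⟩ := hk
  rw [pow_mul, hx, one_pow, e3_one]

end ZetaFacts

end Chars

section SymP
set_option linter.unusedSectionVars false

open UniqueFactorizationMonoid

variable {Fq : Type} [Field Fq] [Fintype Fq] {ζ : Fq}

lemma not_dvd_C {P : Polynomial Fq} (hirr : Irreducible P) {x : Fq} (hx : x ≠ 0) :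
    ¬ P ∣ Polynomial.C x := by
  intro h
  have h1 : P.natDegree ≤ (Polynomial.C x).natDegree :=
    Polynomial.natDegree_le_of_dvd h (by simp [hx])
  rw [Polynomial.natDegree_C] at h1
  exact absurd (Nat.le_zero.mp h1) hirr.natDegree_pos.ne'

lemma dvd_C_sub_C_iff {P : Polynomial Fq} (hirr : Irreducible P) {x y : Fq} :
    P ∣ Polynomial.C x - Polynomial.C y ↔ x = y := by
  constructor
  · intro h
    by_contra hne
    rw [← Polynomial.C_sub] at h
    exact not_dvd_C hirr (sub_ne_zero.mpr hne) h
  · rintro rfl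
    simp

lemma cubicSymP_eq_e3 (hζ3 : ζ ^ 3 = 1) (hζ1 : ζ ≠ 1) {P : Polynomial Fq}
    (hirr : Irreducible P) {a : Polynomial Fq} (hnd : ¬ P ∣ a) {μ : Fq}
    (hμ : μ = 1 ∨ μ = ζ ∨ μ = ζ ^ 2)
    (hdvd : P ∣ a ^ ((Fintype.card Fq ^ P.natDegree - 1) / 3) - Polynomial.C μ) :
    cubicSymP Fq ζ P a = e3 ζ μ := by
  set K := (Fintype.card Fq ^ P.natDegree - 1) / 3 with hKdef
  have key : ∀ t : Fq, P ∣ a ^ K - Polynomial.C t ↔ μ = t := by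
    intro t
    constructor
    · intro h
      have h2 := dvd_sub h hdvd
      rw [show a ^ K - Polynomial.C t - (a ^ K - Polynomial.C μ) =
          Polynomial.C μ - Polynomial.C t by ring] at h2
      exact (dvd_C_sub_C_iff hirr).mp h2
    · rintro rfl
      exact hdvd
  have key1 : P ∣ a ^ K - 1 ↔ μ = 1 := by
    rw [← Polynomial.C_1]
    exact key 1
  rw [cubicSymP, if_neg hnd]
  rcases hμ with h | h | h
  · rw [if_pos (key1.mpr h), h, e3_one]
  · rw [if_neg (fun hc => hζ1 (h ▸ key1.mp hc)), if_pos ((key ζ).mpr h), h, e3_zeta hζ3 hζ1]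
  · rw [if_neg (fun hc => zeta_sq_ne_one hζ3 hζ1 (h ▸ key1.mp hc)),
      if_neg (fun hc => zeta_sq_ne_zeta hζ3 hζ1 (h ▸ (key ζ).mp hc)), h,
      e3_zeta_sq hζ3 hζ1]

lemma three_dvd_card_sub_one (hq3 : Fintype.card Fq % 3 = 1) :
    3 ∣ Fintype.card Fq - 1 := by
  have := Fintype.one_lt_card (α := Fq)
  omega

lemma three_dvd_card_pow_sub_one (hq3 : Fintype.card Fq % 3 = 1) (d : ℕ) :
    3 ∣ Fintype.card Fq ^ d - 1 := by
  have h1 : Fintype.card Fq ^ d % 3 = 1 % 3 := by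
    rw [Nat.pow_mod, hq3, one_pow]
  have h2 : 1 ≤ Fintype.card Fq ^ d := Nat.one_le_pow _ _ Fintype.card_pos
  omega

lemma pow_mod3_eq {z : Fq} (hz : z ^ 3 = 1) (a : ℕ) : z ^ a = z ^ (a % 3) := by
  conv_lhs => rw [← Nat.div_add_mod a 3]
  rw [pow_add, pow_mul, hz, one_pow, one_mul]

/-- The key scalar computation : `c^((q^d-1)/3) = (c^((q-1)/3))^d`. -/
lemma C_pow_K (hq3 : Fintype.card Fq % 3 = 1) {c : Fq} (hc : c ≠ 0) (d : ℕ) :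
    c ^ ((Fintype.card Fq ^ d - 1) / 3) = (c ^ ((Fintype.card Fq - 1) / 3)) ^ d := by
  set q := Fintype.card Fq with hq
  have hq1 : 1 ≤ q := Fintype.card_pos
  have h3 := three_dvd_card_sub_one hq3
  obtain ⟨t, ht⟩ := h3
  set s := ∑ i ∈ Finset.range d, q ^ i with hs
  have hgs : (q - 1) * s = q ^ d - 1 := by
    have hZ : ((q : ℤ) - 1) * (s : ℤ) = (q : ℤ) ^ d - 1 := by
      rw [hs]
      push_cast
      linear_combination geom_sum_mul (q : ℤ) d
    have h2 : 1 ≤ q ^ d := Nat.one_le_pow _ _ Fintype.card_pos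
    have h4 : (((q - 1) * s : ℕ) : ℤ) = ((q ^ d - 1 : ℕ) : ℤ) := by
      push_cast [Nat.cast_sub hq1, Nat.cast_sub h2]
      linear_combination hZ
    exact_mod_cast h4
  have hK : (q ^ d - 1) / 3 = t * s := by
    rw [← hgs, ht, mul_assoc, Nat.mul_div_cancel_left _ (by norm_num : 0 < 3)]
  have ht' : (q - 1) / 3 = t := by
    rw [ht, Nat.mul_div_cancel_left _ (by norm_num : 0 < 3)]
  rw [hK, ht']
  set z := c ^ t with hz
  have hc1 : c ^ (q - 1) = 1 := FiniteField.pow_card_sub_one_eq_one c hc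
  have hz3 : z ^ 3 = 1 := by
    rw [hz, ← pow_mul, show t * 3 = q - 1 by omega, hc1]
  have hsd : s % 3 = d % 3 := by
    have h1 : s % 3 = (∑ i ∈ Finset.range d, q ^ i % 3) % 3 := Finset.sum_nat_mod _ _ _
    have h2 : ∀ i ∈ Finset.range d, q ^ i % 3 = 1 := by
      intro i _
      rw [Nat.pow_mod, hq3, one_pow]
      norm_num
    rw [Finset.sum_congr rfl h2, Finset.sum_const, Finset.card_range, smul_eq_mul,
      mul_one] at h1
    exact h1
  calc c ^ (t * s) = z ^ s := by rw [hz, ← pow_mul]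
    _ = z ^ (s % 3) := pow_mod3_eq hz3 s
    _ = z ^ (d % 3) := by rw [hsd]
    _ = z ^ d := (pow_mod3_eq hz3 d).symm

end SymP

section SymP2
set_option linter.unusedSectionVars false

open UniqueFactorizationMonoid

variable {Fq : Type} [Field Fq] [Fintype Fq] {ζ : Fq}

/-- Exhaustiveness: modulo an irreducible `P`, the `(q^d-1)/3` power of a coprime
polynomial is congruent to a cube root of unity. -/
lemma exists_cubicSymP_mu (hq3 : Fintype.card Fq % 3 = 1) (hζ3 : ζ ^ 3 = 1) (hζ1 : ζ ≠ 1)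
    {P : Polynomial Fq} (hP : P.Monic) (hirr : Irreducible P) {a : Polynomial Fq}
    (hnd : ¬ P ∣ a) :
    ∃ μ : Fq, (μ = 1 ∨ μ = ζ ∨ μ = ζ ^ 2) ∧ μ ^ 3 = 1 ∧
      P ∣ a ^ ((Fintype.card Fq ^ P.natDegree - 1) / 3) - Polynomial.C μ := by
  haveI : Fact (Irreducible P) := ⟨hirr⟩
  set d := P.natDegree with hd
  set pb := AdjoinRoot.powerBasis' hP with hpb
  haveI : Fintype (AdjoinRoot P) := Module.fintypeOfFintype pb.basis
  have hcard : Fintype.card (AdjoinRoot P) = Fintype.card Fq ^ d := by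
    rw [Module.card_fintype pb.basis, Fintype.card_fin]
    rfl
  have h3dvd : 3 ∣ Fintype.card Fq ^ d - 1 := three_dvd_card_pow_sub_one hq3 d
  set Ke := (Fintype.card Fq ^ d - 1) / 3 with hKe
  set u := AdjoinRoot.mk P a with hu
  have hu0 : u ≠ 0 := by
    rw [hu, Ne, AdjoinRoot.mk_eq_zero]
    exact hnd
  have hferm : u ^ (Fintype.card Fq ^ d - 1) = 1 := by
    rw [← hcard]
    exact FiniteField.pow_card_sub_one_eq_one u hu0
  set y := u ^ Ke with hy
  have hy3 : y ^ 3 = 1 := by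
    rw [hy, ← pow_mul, hKe, Nat.div_mul_cancel h3dvd, hferm]
  set w := (AdjoinRoot.of P) ζ with hw
  have hw3 : w ^ 3 = 1 := by
    rw [hw, ← map_pow, hζ3, map_one]
  have hws : 1 + w + w ^ 2 = 0 := by
    have h := one_add_zeta_add_sq hζ3 hζ1
    have : (1 : AdjoinRoot P) + w + w ^ 2 = (AdjoinRoot.of P) (1 + ζ + ζ ^ 2) := by
      rw [map_add, map_add, map_one, map_pow]
    rw [this, h, map_zero]
  have hy31 : y ^ 3 - 1 = 0 := by rw [hy3]; ring
  have hprod : (y - 1) * ((y - w) * (y - w ^ 2)) = 0 := by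
    linear_combination (y - y ^ 2) * hws + hy31 + (y - 1) * hw3
  have hdvd_of : ∀ μ : Fq, y = (AdjoinRoot.of P) μ → P ∣ a ^ Ke - Polynomial.C μ := by
    intro μ hμ
    rw [← AdjoinRoot.mk_eq_zero (f := P)]
    rw [map_sub, map_pow]
    have hCμ : (AdjoinRoot.mk P) (Polynomial.C μ) = (AdjoinRoot.of P) μ := rfl
    rw [hCμ, ← hu, ← hy, hμ, sub_self]
  rcases mul_eq_zero.mp hprod with h1 | h1
  · refine ⟨1, Or.inl rfl, one_pow 3, hdvd_of 1 ?_⟩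
    rw [map_one]
    linear_combination h1
  · rcases mul_eq_zero.mp h1 with h2 | h2
    · refine ⟨ζ, Or.inr (Or.inl rfl), hζ3, hdvd_of ζ ?_⟩
      rw [← hw]
      linear_combination h2
    · refine ⟨ζ ^ 2, Or.inr (Or.inr rfl), mu3_pow hζ3 2, hdvd_of (ζ ^ 2) ?_⟩
      rw [map_pow, ← hw]
      linear_combination h2

/-- Value of the cubic residue symbol at constants. -/
lemma cubicSymP_C (hq3 : Fintype.card Fq % 3 = 1) (hζ3 : ζ ^ 3 = 1) (hζ1 : ζ ≠ 1)
    {P : Polynomial Fq} (hP : P.Monic) (hirr : Irreducible P) {c : Fq} (hc : c ≠ 0) :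
    cubicSymP Fq ζ P (Polynomial.C c) =
      e3 ζ ((c ^ ((Fintype.card Fq - 1) / 3)) ^ P.natDegree) := by
  have h3 := three_dvd_card_sub_one (Fq := Fq) hq3
  have hz3 : (c ^ ((Fintype.card Fq - 1) / 3)) ^ 3 = 1 := by
    rw [← pow_mul, Nat.div_mul_cancel h3]
    exact FiniteField.pow_card_sub_one_eq_one c hc
  refine cubicSymP_eq_e3 hζ3 hζ1 hirr (not_dvd_C hirr hc)
    (mu3_of_cube hζ3 hζ1 (mu3_pow hz3 P.natDegree)) ?_
  have h := C_pow_K hq3 hc P.natDegree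
  simp only [← Polynomial.C_pow, h, sub_self]
  exact dvd_zero P

/-- Multiplicativity of the cubic residue symbol against constants. -/
lemma cubicSymP_C_mul (hq3 : Fintype.card Fq % 3 = 1) (hζ3 : ζ ^ 3 = 1) (hζ1 : ζ ≠ 1)
    {P : Polynomial Fq} (hP : P.Monic) (hirr : Irreducible P) {c : Fq} (hc : c ≠ 0)
    (a : Polynomial Fq) :
    cubicSymP Fq ζ P (Polynomial.C c * a) =
      cubicSymP Fq ζ P (Polynomial.C c) * cubicSymP Fq ζ P a := by
  set d := P.natDegree with hd
  set z := c ^ ((Fintype.card Fq - 1) / 3) with hz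
  have h3 := three_dvd_card_sub_one (Fq := Fq) hq3
  have hz3 : z ^ 3 = 1 := by
    rw [hz, ← pow_mul, Nat.div_mul_cancel h3]
    exact FiniteField.pow_card_sub_one_eq_one c hc
  by_cases hnd : P ∣ a
  · have h1 : cubicSymP Fq ζ P a = 0 := by rw [cubicSymP, if_pos hnd]
    have h2 : cubicSymP Fq ζ P (Polynomial.C c * a) = 0 := by
      rw [cubicSymP, if_pos (hnd.mul_left _)]
    rw [h1, h2, mul_zero]
  · obtain ⟨μ, hμmem, hμ3, hμdvd⟩ := exists_cubicSymP_mu hq3 hζ3 hζ1 hP hirr hnd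
    have hval_a : cubicSymP Fq ζ P a = e3 ζ μ := cubicSymP_eq_e3 hζ3 hζ1 hirr hnd hμmem hμdvd
    have hval_c : cubicSymP Fq ζ P (Polynomial.C c) = e3 ζ (z ^ d) :=
      cubicSymP_C hq3 hζ3 hζ1 hP hirr hc
    have hnd2 : ¬ P ∣ Polynomial.C c * a := by
      intro h
      apply hnd
      have h2 : P ∣ Polynomial.C c⁻¹ * (Polynomial.C c * a) := h.mul_left _
      rwa [← mul_assoc, ← Polynomial.C_mul, inv_mul_cancel₀ hc, Polynomial.C_1, one_mul] at h2
    have hCcK : (Polynomial.C c) ^ ((Fintype.card Fq ^ d - 1) / 3) =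
        Polynomial.C (z ^ d) := by
      rw [← Polynomial.C_pow, C_pow_K hq3 hc d, hz]
    have hdvd2 : P ∣ (Polynomial.C c * a) ^ ((Fintype.card Fq ^ d - 1) / 3) -
        Polynomial.C (z ^ d * μ) := by
      rw [mul_pow, hCcK, Polynomial.C_mul, ← mul_sub]
      exact hμdvd.mul_left _
    have hval2 : cubicSymP Fq ζ P (Polynomial.C c * a) = e3 ζ (z ^ d * μ) :=
      cubicSymP_eq_e3 hζ3 hζ1 hirr hnd2
        (mu3_of_cube hζ3 hζ1 (mu3_mul (mu3_pow hz3 d) hμ3)) hdvd2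
    rw [hval2, hval_a, hval_c, e3_mul hζ3 hζ1 (mu3_pow hz3 d) hμ3]

lemma cubicSymP_one {P : Polynomial Fq} (hirr : Irreducible P) :
    cubicSymP Fq ζ P 1 = 1 := by
  rw [cubicSymP, if_neg (fun h => hirr.not_isUnit (isUnit_of_dvd_one h)),
    if_pos (by rw [one_pow, sub_self]; exact dvd_zero P)]

/-- Periodicity of `cubicSymP` modulo `P`. -/
lemma cubicSymP_congr {P a b : Polynomial Fq} (h : P ∣ a - b) :
    cubicSymP Fq ζ P a = cubicSymP Fq ζ P b := by
  set K := (Fintype.card Fq ^ P.natDegree - 1) / 3 with hK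
  have h1 : (P ∣ a) = (P ∣ b) := by
    apply propext
    constructor
    · intro hh
      have h2 := dvd_sub hh h
      rwa [show a - (a - b) = b by ring] at h2
    · intro hh
      have h2 := dvd_add hh h
      rwa [show b + (a - b) = a by ring] at h2
  have hKd : P ∣ a ^ K - b ^ K := dvd_trans h (sub_dvd_pow_sub_pow a b K)
  have h2 : ∀ t : Polynomial Fq, (P ∣ a ^ K - t) = (P ∣ b ^ K - t) := by
    intro t
    apply propext
    constructor
    · intro hh
      have h3 := dvd_sub hh hKd
      rwa [show a ^ K - t - (a ^ K - b ^ K) = b ^ K - t by ring] at h3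
    · intro hh
      have h3 := dvd_add hh hKd
      rwa [show b ^ K - t + (a ^ K - b ^ K) = a ^ K - t by ring] at h3
  rw [cubicSymP, cubicSymP, h1, ← hK, h2 1, h2 (Polynomial.C ζ)]

lemma normalizedFactor_monic {f P : Polynomial Fq}
    (hP : P ∈ normalizedFactors f) : P.Monic := by
  classical
  have h0 : P ≠ 0 := (irreducible_of_normalized_factor P hP).ne_zero
  have h1 := normalize_normalized_factor P hP
  rw [← h1]
  exact Polynomial.monic_normalize h0

/-- Multiplicativity of the extended cubic symbol against constants. -/
lemma cubicSym_C_mul (hq3 : Fintype.card Fq % 3 = 1) (hζ3 : ζ ^ 3 = 1) (hζ1 : ζ ≠ 1)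
    (f : Polynomial Fq) {c : Fq} (hc : c ≠ 0) (a : Polynomial Fq) :
    cubicSym Fq ζ f (Polynomial.C c * a) =
      cubicSym Fq ζ f (Polynomial.C c) * cubicSym Fq ζ f a := by
  rw [cubicSym, cubicSym, cubicSym, ← Multiset.prod_map_mul]
  congr 1
  apply Multiset.map_congr rfl
  intro P hP
  exact cubicSymP_C_mul hq3 hζ3 hζ1 (normalizedFactor_monic hP)
    (irreducible_of_normalized_factor P hP) hc a

/-- Periodicity of the extended cubic symbol. -/
lemma cubicSym_congr {f a b : Polynomial Fq} (h : f ∣ a - b) :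
    cubicSym Fq ζ f a = cubicSym Fq ζ f b := by
  rw [cubicSym, cubicSym]
  congr 1
  apply Multiset.map_congr rfl
  intro P hP
  exact cubicSymP_congr (dvd_trans (dvd_of_mem_normalizedFactors hP) h)

lemma cubicSym_one (f : Polynomial Fq) : cubicSym Fq ζ f 1 = 1 := by
  rw [cubicSym]
  have : (normalizedFactors f).map (fun P => cubicSymP Fq ζ P 1) =
      (normalizedFactors f).map (fun _ => (1 : ℂ)) := by
    apply Multiset.map_congr rfl
    intro P hP
    exact cubicSymP_one (irreducible_of_normalized_factor P hP)
  rw [this, Multiset.map_const', Multiset.prod_replicate, one_pow]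

/-- Value of the extended cubic symbol at constants. -/
lemma cubicSym_C (hq3 : Fintype.card Fq % 3 = 1) (hζ3 : ζ ^ 3 = 1) (hζ1 : ζ ≠ 1)
    {f : Polynomial Fq} (hf : f.Monic) {c : Fq} (hc : c ≠ 0) :
    cubicSym Fq ζ f (Polynomial.C c) =
      e3 ζ ((c ^ ((Fintype.card Fq - 1) / 3)) ^ f.natDegree) := by
  classical
  set z := c ^ ((Fintype.card Fq - 1) / 3) with hz
  have h3 := three_dvd_card_sub_one (Fq := Fq) hq3
  have hz3 : z ^ 3 = 1 := by
    rw [hz, ← pow_mul, Nat.div_mul_cancel h3]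
    exact FiniteField.pow_card_sub_one_eq_one c hc
  have hfac : (normalizedFactors f).prod = f := by
    have h1 := prod_normalizedFactors hf.ne_zero
    have hmon : ((normalizedFactors f).prod).Monic := by
      have h2 := Polynomial.monic_multiset_prod_of_monic (normalizedFactors f) id
        (fun P hP => normalizedFactor_monic hP)
      simpa using h2
    exact Polynomial.eq_of_monic_of_associated hmon hf h1
  have hdeg : ((normalizedFactors f).map Polynomial.natDegree).sum = f.natDegree := by
    conv_rhs => rw [← hfac]
    rw [Polynomial.natDegree_multiset_prod]
    intro h0
    exact (irreducible_of_normalized_factor 0 h0).ne_zero rfl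
  rw [cubicSym]
  have hmap : (normalizedFactors f).map (fun P => cubicSymP Fq ζ P (Polynomial.C c)) =
      (normalizedFactors f).map (fun P => e3 ζ (z ^ P.natDegree)) := by
    apply Multiset.map_congr rfl
    intro P hP
    rw [cubicSymP_C hq3 hζ3 hζ1 (normalizedFactor_monic hP)
      (irreducible_of_normalized_factor P hP) hc, hz]
  rw [hmap]
  have hgen : ∀ s : Multiset (Polynomial Fq),
      (s.map (fun P => e3 ζ (z ^ P.natDegree))).prod = e3 ζ (z ^ (s.map Polynomial.natDegree).sum) := by
    intro s
    induction s using Multiset.induction with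
    | empty => simp [e3_one]
    | cons P s ih =>
      rw [Multiset.map_cons, Multiset.prod_cons, ih, Multiset.map_cons, Multiset.sum_cons,
        pow_add, e3_mul hζ3 hζ1 (mu3_pow hz3 _) (mu3_pow hz3 _)]
  rw [hgen, hdeg]

end SymP2

section Derived
set_option linter.unusedSectionVars false

variable {Fq : Type} [Field Fq] [Fintype Fq] {ζ : Fq}
variable (p : ℕ) [Fact p.Prime] [Algebra (ZMod p) Fq]

lemma inner_of_zero (m : ℕ) {f : Polynomial Fq} :
    ∑ h ∈ Mdeg Fq m, stdChar Fq p (Lc Fq f (h * 0)) = (Fintype.card Fq : ℂ) ^ m := by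
  have : ∀ h ∈ Mdeg Fq m, stdChar Fq p (Lc Fq f (h * 0)) = 1 := by
    intro h _
    rw [mul_zero, Lc_zero, stdChar_zero]
  rw [Finset.sum_congr rfl this, Finset.sum_const, nsmul_eq_mul, mul_one, card_Mdeg]

lemma cubicSym_C_inv_mul (hq3 : Fintype.card Fq % 3 = 1) (hζ3 : ζ ^ 3 = 1) (hζ1 : ζ ≠ 1)
    (f : Polynomial Fq) {c : Fq} (hc : c ≠ 0) :
    cubicSym Fq ζ f (Polynomial.C c⁻¹) * cubicSym Fq ζ f (Polynomial.C c) = 1 := by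
  rw [← cubicSym_C_mul hq3 hζ3 hζ1 f (inv_ne_zero hc) (Polynomial.C c), ← Polynomial.C_mul,
    inv_mul_cancel₀ hc, Polynomial.C_1, cubicSym_one]

lemma e3_ne_zero (hζ3 : ζ ^ 3 = 1) (hζ1 : ζ ≠ 1) {x : Fq} (hx : x ^ 3 = 1) :
    e3 ζ x ≠ 0 := by
  have hω : omega3 ≠ 0 := by
    intro h
    have := abs_omega3
    rw [h] at this
    simp at this
  rcases e3_cube_val hζ3 hζ1 hx with h | h | h <;> rw [h]
  · exact one_ne_zero
  · exact hω
  · exact pow_ne_zero 2 hω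

lemma cubicSym_C_ne_zero (hq3 : Fintype.card Fq % 3 = 1) (hζ3 : ζ ^ 3 = 1) (hζ1 : ζ ≠ 1)
    {f : Polynomial Fq} (hf : f.Monic) {c : Fq} (hc : c ≠ 0) :
    cubicSym Fq ζ f (Polynomial.C c) ≠ 0 := by
  rw [cubicSym_C hq3 hζ3 hζ1 hf hc]
  have h3 := three_dvd_card_sub_one (Fq := Fq) hq3
  have hz3 : (c ^ ((Fintype.card Fq - 1) / 3)) ^ 3 = 1 := by
    rw [← pow_mul, Nat.div_mul_cancel h3]
    exact FiniteField.pow_card_sub_one_eq_one c hc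
  exact e3_ne_zero hζ3 hζ1 (mu3_pow hz3 f.natDegree)

lemma conj_cubicSym_C (hq3 : Fintype.card Fq % 3 = 1) (hζ3 : ζ ^ 3 = 1) (hζ1 : ζ ≠ 1)
    {f : Polynomial Fq} (hf : f.Monic) {c : Fq} (hc : c ≠ 0) :
    (starRingEnd ℂ) (cubicSym Fq ζ f (Polynomial.C c)) * cubicSym Fq ζ f (Polynomial.C c)
      = 1 := by
  rw [cubicSym_C hq3 hζ3 hζ1 hf hc]
  have h3 := three_dvd_card_sub_one (Fq := Fq) hq3
  have hz3 : (c ^ ((Fintype.card Fq - 1) / 3)) ^ 3 = 1 := by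
    rw [← pow_mul, Nat.div_mul_cancel h3]
    exact FiniteField.pow_card_sub_one_eq_one c hc
  exact conj_e3 hζ3 hζ1 (mu3_pow hz3 f.natDegree)

lemma cubicSym_C_inv_eq_conj (hq3 : Fintype.card Fq % 3 = 1) (hζ3 : ζ ^ 3 = 1) (hζ1 : ζ ≠ 1)
    {f : Polynomial Fq} (hf : f.Monic) {c : Fq} (hc : c ≠ 0) :
    cubicSym Fq ζ f (Polynomial.C c⁻¹) =
      (starRingEnd ℂ) (cubicSym Fq ζ f (Polynomial.C c)) := by
  have h1 := cubicSym_C_inv_mul hq3 hζ3 hζ1 f hc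
  have h2 := conj_cubicSym_C hq3 hζ3 hζ1 hf hc
  have h0 := cubicSym_C_ne_zero hq3 hζ3 hζ1 hf hc
  exact mul_right_cancel₀ h0 (h1.trans h2.symm)

lemma cubicSym_C_of_three_dvd (hq3 : Fintype.card Fq % 3 = 1) (hζ3 : ζ ^ 3 = 1) (hζ1 : ζ ≠ 1)
    {f : Polynomial Fq} (hf : f.Monic) (hdvd : 3 ∣ f.natDegree) {c : Fq} (hc : c ≠ 0) :
    cubicSym Fq ζ f (Polynomial.C c) = 1 := by
  rw [cubicSym_C hq3 hζ3 hζ1 hf hc]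
  have h3 := three_dvd_card_sub_one (Fq := Fq) hq3
  have hz3 : (c ^ ((Fintype.card Fq - 1) / 3)) ^ 3 = 1 := by
    rw [← pow_mul, Nat.div_mul_cancel h3]
    exact FiniteField.pow_card_sub_one_eq_one c hc
  exact e3_eq_one_of_dvd hζ3 hζ1 hz3 hdvd

lemma pow_ne_one_of_not_dvd {z : Fq} (hz3 : z ^ 3 = 1) (hz1 : z ≠ 1) {n : ℕ}
    (hn : ¬ 3 ∣ n) : z ^ n ≠ 1 := by
  intro h
  rw [pow_mod3_eq hz3] at h
  have h3 : n % 3 = 1 ∨ n % 3 = 2 := by omega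
  rcases h3 with h3 | h3
  · rw [h3, pow_one] at h
    exact hz1 h
  · rw [h3] at h
    apply hz1
    have h4 : z * z ^ 2 = z ^ 3 := by ring
    rw [h, hz3] at h4
    simpa using h4

/-- Existence of a constant with nontrivial cubic character value when `3 ∤ deg f`. -/
lemma exists_const_ne_one (hq3 : Fintype.card Fq % 3 = 1) (hζ3 : ζ ^ 3 = 1) (hζ1 : ζ ≠ 1)
    {f : Polynomial Fq} (hf : f.Monic) (hndvd : ¬ 3 ∣ f.natDegree) :
    ∃ c0 : Fq, c0 ≠ 0 ∧ cubicSym Fq ζ f (Polynomial.C c0) ≠ 1 := by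
  classical
  have hq2 : 2 ≤ Fintype.card Fq := Fintype.one_lt_card
  have hq4 : 4 ≤ Fintype.card Fq := by omega
  set t := (Fintype.card Fq - 1) / 3 with ht
  have h3 := three_dvd_card_sub_one (Fq := Fq) hq3
  have ht0 : t ≠ 0 := by
    rw [ht]
    omega
  have htlt : t < Fintype.card Fq - 1 := by
    rw [ht]
    omega
  obtain ⟨g, hg⟩ := IsCyclic.exists_generator (α := Fqˣ)
  have horder : orderOf g = Fintype.card Fq - 1 := by
    rw [orderOf_eq_card_of_forall_mem_zpowers hg, Nat.card_eq_fintype_card,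
      Fintype.card_units]
  have hgt : g ^ t ≠ 1 := pow_ne_one_of_lt_orderOf ht0 (by rw [horder]; exact htlt)
  set x := ((g : Fqˣ) : Fq) with hx
  have hx0 : x ≠ 0 := Units.ne_zero g
  have hxt : x ^ t ≠ 1 := by
    intro h
    apply hgt
    ext
    rw [Units.val_pow_eq_pow_val, Units.val_one]
    exact h
  refine ⟨x, hx0, ?_⟩
  rw [cubicSym_C hq3 hζ3 hζ1 hf hx0, ← ht]
  set z := x ^ t with hz
  have hz3 : z ^ 3 = 1 := by
    rw [hz, ← pow_mul, show t * 3 = Fintype.card Fq - 1 by omega]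
    exact FiniteField.pow_card_sub_one_eq_one x hx0
  have hzn1 : z ^ f.natDegree ≠ 1 := pow_ne_one_of_not_dvd hz3 hxt hndvd
  rcases mu3_of_cube hζ3 hζ1 (mu3_pow hz3 f.natDegree) with h | h | h
  · exact absurd h hzn1
  · rw [h, e3_zeta hζ3 hζ1]
    exact omega3_ne_one
  · rw [h, e3_zeta_sq hζ3 hζ1]
    exact omega3_sq_ne_one

/-- Vanishing of the constant character sum when `3 ∤ deg f`. -/
lemma sum_cubicSym_C_eq_zero (hq3 : Fintype.card Fq % 3 = 1) (hζ3 : ζ ^ 3 = 1) (hζ1 : ζ ≠ 1)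
    {f : Polynomial Fq} (hf : f.Monic) (hndvd : ¬ 3 ∣ f.natDegree) :
    ∑ c : Fqˣ, cubicSym Fq ζ f (Polynomial.C (c : Fq)) = 0 := by
  obtain ⟨c0, hc0, hne⟩ := exists_const_ne_one hq3 hζ3 hζ1 hf hndvd
  set u0 : Fqˣ := Units.mk0 c0 hc0 with hu0
  set S := ∑ c : Fqˣ, cubicSym Fq ζ f (Polynomial.C (c : Fq)) with hS
  have hshift : S = cubicSym Fq ζ f (Polynomial.C c0) * S := by
    rw [hS, Finset.mul_sum]
    refine Fintype.sum_equiv (Equiv.mulLeft u0⁻¹) _ _ fun c => ?_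
    show cubicSym Fq ζ f (Polynomial.C (c : Fq)) =
      cubicSym Fq ζ f (Polynomial.C c0) *
        cubicSym Fq ζ f (Polynomial.C ((u0⁻¹ * c : Fqˣ) : Fq))
    rw [← cubicSym_C_mul hq3 hζ3 hζ1 f hc0, ← Polynomial.C_mul]
    congr 2
    rw [Units.val_mul, show ((u0⁻¹ : Fqˣ) : Fq) = c0⁻¹ by rw [hu0]; simp,
      ← mul_assoc, mul_inv_cancel₀ hc0, one_mul]
  have h2 : (1 - cubicSym Fq ζ f (Polynomial.C c0)) * S = 0 := by
    rw [sub_mul, one_mul]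
    linear_combination hshift
  rcases mul_eq_zero.mp h2 with h3 | h3
  · exact absurd (by linear_combination -h3) hne
  · exact h3

/-- Vanishing of `G_q(0,f)` when `3 ∤ deg f`. -/
lemma Gq_zero_eq_zero (hq3 : Fintype.card Fq % 3 = 1) (hζ3 : ζ ^ 3 = 1) (hζ1 : ζ ≠ 1)
    {f : Polynomial Fq} (hf : f.Monic) (hndvd : ¬ 3 ∣ f.natDegree) :
    Gq Fq ζ p 0 f = 0 := by
  obtain ⟨c0, hc0, hne⟩ := exists_const_ne_one hq3 hζ3 hζ1 hf hndvd
  have hG : Gq Fq ζ p 0 f = ∑ u ∈ degLT Fq f.natDegree, cubicSym Fq ζ f u := by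
    rw [Gq, residues_eq]
    refine Finset.sum_congr rfl fun u _ => ?_
    rw [eqF_eq, mul_zero, Lc_zero, stdChar_zero, mul_one]
  rw [hG]
  set S := ∑ u ∈ degLT Fq f.natDegree, cubicSym Fq ζ f u with hS
  have hshift : S = cubicSym Fq ζ f (Polynomial.C c0) * S := by
    rw [hS, Finset.mul_sum]
    refine Finset.sum_nbij' (fun u => Polynomial.C c0⁻¹ * u) (fun u => Polynomial.C c0 * u)
      ?_ ?_ ?_ ?_ ?_
    · intro a ha
      rw [mem_degLT] at ha ⊢
      rwa [Polynomial.degree_C_mul (inv_ne_zero hc0)]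
    · intro a ha
      rw [mem_degLT] at ha ⊢
      rwa [Polynomial.degree_C_mul hc0]
    · intro a _
      show Polynomial.C c0 * (Polynomial.C c0⁻¹ * a) = a
      rw [← mul_assoc, ← Polynomial.C_mul, mul_inv_cancel₀ hc0, Polynomial.C_1, one_mul]
    · intro a _
      show Polynomial.C c0⁻¹ * (Polynomial.C c0 * a) = a
      rw [← mul_assoc, ← Polynomial.C_mul, inv_mul_cancel₀ hc0, Polynomial.C_1, one_mul]
    · intro u _
      show cubicSym Fq ζ f u =
        cubicSym Fq ζ f (Polynomial.C c0) * cubicSym Fq ζ f (Polynomial.C c0⁻¹ * u)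
      rw [← cubicSym_C_mul hq3 hζ3 hζ1 f hc0, ← mul_assoc, ← Polynomial.C_mul,
        mul_inv_cancel₀ hc0, Polynomial.C_1, one_mul]
  have h2 : (1 - cubicSym Fq ζ f (Polynomial.C c0)) * S = 0 := by
    rw [sub_mul, one_mul]
    linear_combination hshift
  rcases mul_eq_zero.mp h2 with h3 | h3
  · exact absurd (by linear_combination -h3) hne
  · exact h3

/-- `∑_{c ∈ F_q^×} stdChar c = -1`. -/
lemma sum_units_stdChar (hp : p = ringChar Fq) :
    ∑ c : Fqˣ, stdChar Fq p ((c : Fq)) = -1 := by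
  classical
  have h1 : ∑ c : Fqˣ, stdChar Fq p ((c : Fq)) =
      ∑ x ∈ (Finset.univ : Finset Fq).erase 0, stdChar Fq p x := by
    refine Finset.sum_nbij' (fun c => (c : Fq))
      (fun x => if hx : x = 0 then 1 else Units.mk0 x hx) ?_ ?_ ?_ ?_ ?_
    · intro c _
      exact Finset.mem_erase.mpr ⟨Units.ne_zero c, Finset.mem_univ _⟩
    · intro x _
      exact Finset.mem_univ _
    · intro c _
      show (if hx : ((c : Fq)) = 0 then (1 : Fqˣ) else Units.mk0 _ hx) = c
      rw [dif_neg (Units.ne_zero c)]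
      ext
      rfl
    · intro x hx
      show (((if hx' : x = 0 then (1 : Fqˣ) else Units.mk0 x hx') : Fqˣ) : Fq) = x
      rw [dif_neg (Finset.mem_erase.mp hx).1]
      rfl
    · intro c _
      rfl
  have h2 := sum_stdChar Fq p hp
  rw [← Finset.add_sum_erase _ _ (Finset.mem_univ (0 : Fq)), stdChar_zero] at h2
  rw [h1]
  linear_combination h2

end Derived

section Expand
set_option linter.unusedSectionVars false

variable {Fq : Type} [Field Fq] [Fintype Fq] {ζ : Fq}
variable (p : ℕ) [Fact p.Prime] [Algebra (ZMod p) Fq]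

lemma Gq_eq_sum (V f : Polynomial Fq) :
    Gq Fq ζ p V f = ∑ u ∈ degLT Fq f.natDegree,
      cubicSym Fq ζ f u * stdChar Fq p (Lc Fq f (u * V)) := rfl

/-- Pulling a constant out of the generalized Gauss sum. -/
lemma Gq_C_mul (hq3 : Fintype.card Fq % 3 = 1) (hζ3 : ζ ^ 3 = 1) (hζ1 : ζ ≠ 1)
    {f : Polynomial Fq} (hf : f.Monic) {c : Fq} (hc : c ≠ 0) (V : Polynomial Fq) :
    Gq Fq ζ p (Polynomial.C c * V) f =
      cubicSym Fq ζ f (Polynomial.C c⁻¹) * Gq Fq ζ p V f := by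
  rw [Gq_eq_sum, Gq_eq_sum, Finset.mul_sum]
  refine Finset.sum_nbij' (fun u => Polynomial.C c * u) (fun u => Polynomial.C c⁻¹ * u)
    ?_ ?_ ?_ ?_ ?_
  · intro a ha
    rw [mem_degLT] at ha ⊢
    rwa [Polynomial.degree_C_mul hc]
  · intro a ha
    rw [mem_degLT] at ha ⊢
    rwa [Polynomial.degree_C_mul (inv_ne_zero hc)]
  · intro a _
    show Polynomial.C c⁻¹ * (Polynomial.C c * a) = a
    rw [← mul_assoc, ← Polynomial.C_mul, inv_mul_cancel₀ hc, Polynomial.C_1, one_mul]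
  · intro a _
    show Polynomial.C c * (Polynomial.C c⁻¹ * a) = a
    rw [← mul_assoc, ← Polynomial.C_mul, mul_inv_cancel₀ hc, Polynomial.C_1, one_mul]
  · intro u _
    show cubicSym Fq ζ f u * stdChar Fq p (Lc Fq f (u * (Polynomial.C c * V))) =
      cubicSym Fq ζ f (Polynomial.C c⁻¹) *
        (cubicSym Fq ζ f (Polynomial.C c * u) * stdChar Fq p (Lc Fq f (Polynomial.C c * u * V)))
    have harg : Lc Fq f (u * (Polynomial.C c * V)) = Lc Fq f (Polynomial.C c * u * V) := by
      congr 1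
      ring
    rw [harg, cubicSym_C_mul hq3 hζ3 hζ1 f hc, ← mul_assoc, ← mul_assoc,
      cubicSym_C_inv_mul hq3 hζ3 hζ1 f hc, one_mul]

/-- The twisted Gauss sum with `-u` equals `χ(-1)` times the Gauss sum. -/
lemma gauss_neg (hq3 : Fintype.card Fq % 3 = 1) (hζ3 : ζ ^ 3 = 1) (hζ1 : ζ ≠ 1)
    {f : Polynomial Fq} (hf : f.Monic) (V : Polynomial Fq) :
    ∑ u ∈ degLT Fq f.natDegree, cubicSym Fq ζ f u * stdChar Fq p (Lc Fq f (-u * V)) =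
      cubicSym Fq ζ f (Polynomial.C (-1)) * Gq Fq ζ p V f := by
  rw [Gq_eq_sum, Finset.mul_sum]
  have hm1 : (-1 : Fq) ≠ 0 := by norm_num
  refine Finset.sum_nbij' (fun u => -u) (fun u => -u) ?_ ?_ ?_ ?_ ?_
  · intro a ha
    rw [mem_degLT] at ha ⊢
    rwa [Polynomial.degree_neg]
  · intro a ha
    rw [mem_degLT] at ha ⊢
    rwa [Polynomial.degree_neg]
  · intro a _
    show - -a = a
    ring
  · intro a _
    show - -a = a
    ring
  · intro u _
    show cubicSym Fq ζ f u * stdChar Fq p (Lc Fq f (-u * V)) =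
      cubicSym Fq ζ f (Polynomial.C (-1)) *
        (cubicSym Fq ζ f (-u) * stdChar Fq p (Lc Fq f (-u * V)))
    rw [← mul_assoc, ← cubicSym_C_mul hq3 hζ3 hζ1 f hm1]
    congr 2
    rw [show Polynomial.C (-1 : Fq) = -1 by simp]
    ring

/-- `u = h %ₘ f` iff `f ∣ h - u`, for `u` of small degree. -/
lemma mod_eq_iff_dvd {f : Polynomial Fq} (hf : f.Monic) {h u : Polynomial Fq}
    (hu : u.degree < (f.natDegree : ℕ)) : f ∣ h - u ↔ u = h %ₘ f := by
  have hudeg : u.degree < f.degree := by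
    rwa [Polynomial.degree_eq_natDegree hf.ne_zero]
  constructor
  · intro hd
    have h1 : (h - u) %ₘ f = 0 := (Polynomial.modByMonic_eq_zero_iff_dvd hf).mpr hd
    have h2 : (h - u) %ₘ f = h %ₘ f - u := by
      rw [sub_eq_add_neg, Polynomial.add_modByMonic,
        show -u = (-1 : Fq) • u by simp, Polynomial.smul_modByMonic,
        (Polynomial.modByMonic_eq_self_iff hf).mpr hudeg, neg_one_smul,
        ← sub_eq_add_neg]
    rw [h2] at h1
    exact (sub_eq_zero.mp h1).symm
  · rintro rfl
    rw [Polynomial.modByMonic_eq_sub_mul_div h f]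
    exact ⟨h /ₘ f, by ring⟩

end Expand

section Expand2
set_option linter.unusedSectionVars false

variable {Fq : Type} [Field Fq] [Fintype Fq] {ζ : Fq}
variable (p : ℕ) [Fact p.Prime] [Algebra (ZMod p) Fq]

/-- The Poisson-summation style expansion of the character sum. -/
lemma key_expand (hq3 : Fintype.card Fq % 3 = 1) (hζ3 : ζ ^ 3 = 1) (hζ1 : ζ ≠ 1)
    (hp : p = ringChar Fq) {f : Polynomial Fq} (hf : f.Monic) (hn1 : 1 ≤ f.natDegree)
    (m : ℕ) :
    ∑ h ∈ Mdeg Fq m, cubicSym Fq ζ f h =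
      ((Fintype.card Fq : ℂ) ^ f.natDegree)⁻¹ * cubicSym Fq ζ f (Polynomial.C (-1)) *
        ∑ V ∈ degLT Fq f.natDegree,
          (∑ h ∈ Mdeg Fq m, stdChar Fq p (Lc Fq f (h * V))) * Gq Fq ζ p V f := by
  classical
  have hN0 : ((Fintype.card Fq : ℂ) ^ f.natDegree) ≠ 0 :=
    pow_ne_zero _ (Nat.cast_ne_zero.mpr Fintype.card_ne_zero)
  have step1 : ∀ h : Polynomial Fq,
      cubicSym Fq ζ f h * ((Fintype.card Fq : ℂ) ^ f.natDegree) =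
      ∑ u ∈ degLT Fq f.natDegree, cubicSym Fq ζ f u *
        ∑ V ∈ degLT Fq f.natDegree, stdChar Fq p (Lc Fq f ((h - u) * V)) := by
    intro h
    have hsum : ∀ u ∈ degLT Fq f.natDegree,
        cubicSym Fq ζ f u *
          ∑ V ∈ degLT Fq f.natDegree, stdChar Fq p (Lc Fq f ((h - u) * V)) =
        if u = h %ₘ f then cubicSym Fq ζ f u * (Fintype.card Fq : ℂ) ^ f.natDegree
          else 0 := by
      intro u hu
      rw [orth p hp hf hn1 (h - u)]
      by_cases hcase : u = h %ₘ f
      · rw [if_pos ((mod_eq_iff_dvd hf ((mem_degLT Fq).mp hu)).mpr hcase), if_pos hcase]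
      · rw [if_neg (fun hd => hcase ((mod_eq_iff_dvd hf ((mem_degLT Fq).mp hu)).mp hd)),
          if_neg hcase, mul_zero]
    rw [Finset.sum_congr rfl hsum, Finset.sum_ite_eq' (degLT Fq f.natDegree) (h %ₘ f)]
    have hmem : h %ₘ f ∈ degLT Fq f.natDegree := by
      rw [mem_degLT]
      exact lt_of_lt_of_le (Polynomial.degree_modByMonic_lt h hf)
        (le_of_eq (Polynomial.degree_eq_natDegree hf.ne_zero))
    rw [if_pos hmem]
    congr 1
    refine cubicSym_congr ?_
    rw [Polynomial.modByMonic_eq_sub_mul_div h f]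
    exact ⟨h /ₘ f, by ring⟩
  have split : ∀ (h u V : Polynomial Fq),
      stdChar Fq p (Lc Fq f ((h - u) * V)) =
        stdChar Fq p (Lc Fq f (h * V)) * stdChar Fq p (Lc Fq f (-u * V)) := by
    intro h u V
    rw [← stdChar_add, ← Lc_add]
    congr 2
    ring
  have big : (∑ h ∈ Mdeg Fq m, cubicSym Fq ζ f h) * ((Fintype.card Fq : ℂ) ^ f.natDegree) =
      cubicSym Fq ζ f (Polynomial.C (-1)) *
        ∑ V ∈ degLT Fq f.natDegree,
          (∑ h ∈ Mdeg Fq m, stdChar Fq p (Lc Fq f (h * V))) * Gq Fq ζ p V f := by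
    rw [Finset.sum_mul]
    calc ∑ h ∈ Mdeg Fq m, cubicSym Fq ζ f h * (Fintype.card Fq : ℂ) ^ f.natDegree
        = ∑ h ∈ Mdeg Fq m, ∑ u ∈ degLT Fq f.natDegree, cubicSym Fq ζ f u *
            ∑ V ∈ degLT Fq f.natDegree, stdChar Fq p (Lc Fq f ((h - u) * V)) :=
          Finset.sum_congr rfl fun h _ => step1 h
      _ = ∑ h ∈ Mdeg Fq m, ∑ V ∈ degLT Fq f.natDegree, ∑ u ∈ degLT Fq f.natDegree,
            stdChar Fq p (Lc Fq f (h * V)) *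
              (cubicSym Fq ζ f u * stdChar Fq p (Lc Fq f (-u * V))) := by
          refine Finset.sum_congr rfl fun h _ => ?_
          rw [show (∑ u ∈ degLT Fq f.natDegree, cubicSym Fq ζ f u *
              ∑ V ∈ degLT Fq f.natDegree, stdChar Fq p (Lc Fq f ((h - u) * V))) =
              ∑ u ∈ degLT Fq f.natDegree, ∑ V ∈ degLT Fq f.natDegree,
                cubicSym Fq ζ f u * stdChar Fq p (Lc Fq f ((h - u) * V)) from
            Finset.sum_congr rfl fun u _ => Finset.mul_sum _ _ _]
          rw [Finset.sum_comm]
          refine Finset.sum_congr rfl fun V _ => Finset.sum_congr rfl fun u _ => ?_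
          rw [split h u V]
          ring
      _ = ∑ V ∈ degLT Fq f.natDegree, ∑ h ∈ Mdeg Fq m, ∑ u ∈ degLT Fq f.natDegree,
            stdChar Fq p (Lc Fq f (h * V)) *
              (cubicSym Fq ζ f u * stdChar Fq p (Lc Fq f (-u * V))) := Finset.sum_comm
      _ = ∑ V ∈ degLT Fq f.natDegree,
            (∑ h ∈ Mdeg Fq m, stdChar Fq p (Lc Fq f (h * V))) *
              (∑ u ∈ degLT Fq f.natDegree,
                cubicSym Fq ζ f u * stdChar Fq p (Lc Fq f (-u * V))) := by
          refine Finset.sum_congr rfl fun V _ => ?_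
          rw [Finset.sum_mul_sum]
      _ = ∑ V ∈ degLT Fq f.natDegree,
            (∑ h ∈ Mdeg Fq m, stdChar Fq p (Lc Fq f (h * V))) *
              (cubicSym Fq ζ f (Polynomial.C (-1)) * Gq Fq ζ p V f) := by
          refine Finset.sum_congr rfl fun V _ => ?_
          rw [gauss_neg p hq3 hζ3 hζ1 hf V]
      _ = cubicSym Fq ζ f (Polynomial.C (-1)) *
            ∑ V ∈ degLT Fq f.natDegree,
              (∑ h ∈ Mdeg Fq m, stdChar Fq p (Lc Fq f (h * V))) * Gq Fq ζ p V f := by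
          rw [Finset.mul_sum]
          refine Finset.sum_congr rfl fun V _ => ?_
          ring
  refine mul_right_cancel₀ hN0 ?_
  rw [big]
  field_simp

/-- Summing over monic polynomials of degree at most `j` by degree. -/
lemma sum_MdegLE_eq (j : ℕ) (F : Polynomial Fq → ℂ) :
    ∑ V ∈ MdegLE Fq j, F V = ∑ d ∈ Finset.range (j + 1), ∑ V ∈ Mdeg Fq d, F V := by
  classical
  have hmaps : ∀ V ∈ MdegLE Fq j, V.natDegree ∈ Finset.range (j + 1) := by
    intro V hV
    rw [Finset.mem_range]
    exact Nat.lt_succ_of_le (mem_MdegLE.mp hV).2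
  rw [← Finset.sum_fiberwise_of_maps_to hmaps F]
  refine Finset.sum_congr rfl fun d hd => ?_
  refine Finset.sum_congr ?_ fun _ _ => rfl
  ext V
  rw [Finset.mem_filter, mem_MdegLE, mem_Mdeg]
  rw [Finset.mem_range] at hd
  constructor
  · rintro ⟨⟨h1, _⟩, h3⟩
    exact ⟨h1, h3⟩
  · rintro ⟨h1, h2⟩
    exact ⟨⟨h1, by omega⟩, h2⟩

/-- Stratification of the residues by degree and leading coefficient. -/
lemma sum_degLT_strat (n : ℕ) (T : Polynomial Fq → ℂ) :
    ∑ V ∈ degLT Fq n, T V =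
      T 0 + ∑ d ∈ Finset.range n, ∑ c : Fqˣ, ∑ V' ∈ Mdeg Fq d,
        T (Polynomial.C (c : Fq) * V') := by
  classical
  have h0 : (0 : Polynomial Fq) ∈ degLT Fq n := by
    rw [mem_degLT, Polynomial.degree_zero]
    exact WithBot.bot_lt_coe _
  rw [← Finset.add_sum_erase _ T h0]
  congr 1
  have hmaps : ∀ V ∈ (degLT Fq n).erase 0, V.natDegree ∈ Finset.range n := by
    intro V hV
    obtain ⟨hV0, hVd⟩ := Finset.mem_erase.mp hV
    rw [Finset.mem_range]
    exact (Polynomial.natDegree_lt_iff_degree_lt hV0).mpr ((mem_degLT Fq).mp hVd)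
  rw [← Finset.sum_fiberwise_of_maps_to hmaps T]
  refine Finset.sum_congr rfl fun d hd => ?_
  rw [Finset.mem_range] at hd
  rw [← Finset.sum_product']
  refine Finset.sum_nbij'
    (fun V => (if h : V.leadingCoeff = 0 then 1 else Units.mk0 V.leadingCoeff h,
      Polynomial.C (V.leadingCoeff)⁻¹ * V))
    (fun x => Polynomial.C ((x.1 : Fqˣ) : Fq) * x.2) ?_ ?_ ?_ ?_ ?_
  · intro V hV
    obtain ⟨hmemr, hdeg⟩ := Finset.mem_filter.mp hV
    obtain ⟨hV0, hVd⟩ := Finset.mem_erase.mp hmemr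
    have hl : V.leadingCoeff ≠ 0 := Polynomial.leadingCoeff_ne_zero.mpr hV0
    rw [Finset.mem_product]
    refine ⟨Finset.mem_univ _, ?_⟩
    rw [mem_Mdeg]
    constructor
    · rw [Polynomial.Monic, Polynomial.leadingCoeff_mul, Polynomial.leadingCoeff_C,
        inv_mul_cancel₀ hl]
    · rw [Polynomial.natDegree_C_mul (inv_ne_zero hl), hdeg]
  · intro x hx
    rw [Finset.mem_product] at hx
    obtain ⟨hmon, hdeg⟩ := mem_Mdeg.mp hx.2
    have hc0 : ((x.1 : Fqˣ) : Fq) ≠ 0 := Units.ne_zero _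
    rw [Finset.mem_filter]
    constructor
    · rw [Finset.mem_erase]
      constructor
      · exact mul_ne_zero (by simpa using hc0) hmon.ne_zero
      · rw [mem_degLT, Polynomial.degree_C_mul hc0,
          Polynomial.degree_eq_natDegree hmon.ne_zero, hdeg]
        exact_mod_cast hd
    · rw [Polynomial.natDegree_C_mul hc0, hdeg]
  · intro V hV
    obtain ⟨hmemr, hdeg⟩ := Finset.mem_filter.mp hV
    obtain ⟨hV0, _⟩ := Finset.mem_erase.mp hmemr
    have hl : V.leadingCoeff ≠ 0 := Polynomial.leadingCoeff_ne_zero.mpr hV0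
    show Polynomial.C (((if h : V.leadingCoeff = 0 then 1
        else Units.mk0 V.leadingCoeff h : Fqˣ)) : Fq) *
      (Polynomial.C (V.leadingCoeff)⁻¹ * V) = V
    rw [dif_neg hl]
    show Polynomial.C V.leadingCoeff * (Polynomial.C (V.leadingCoeff)⁻¹ * V) = V
    rw [← mul_assoc, ← Polynomial.C_mul, mul_inv_cancel₀ hl, Polynomial.C_1, one_mul]
  · intro x hx
    rw [Finset.mem_product] at hx
    obtain ⟨hmon, hdeg⟩ := mem_Mdeg.mp hx.2
    have hc0 : ((x.1 : Fqˣ) : Fq) ≠ 0 := Units.ne_zero _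
    have hlead : (Polynomial.C ((x.1 : Fqˣ) : Fq) * x.2).leadingCoeff = ((x.1 : Fqˣ) : Fq) := by
      rw [Polynomial.leadingCoeff_mul, Polynomial.leadingCoeff_C, hmon.leadingCoeff, mul_one]
    have hstep : (if h : (Polynomial.C ((x.1 : Fqˣ) : Fq) * x.2).leadingCoeff = 0 then (1 : Fqˣ)
        else Units.mk0 _ h) = x.1 := by
      rw [dif_neg (by rw [hlead]; exact hc0)]
      ext
      rw [Units.val_mk0]
      exact hlead
    refine Prod.ext hstep ?_
    show Polynomial.C ((Polynomial.C ((x.1 : Fqˣ) : Fq) * x.2).leadingCoeff)⁻¹ *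
      (Polynomial.C ((x.1 : Fqˣ) : Fq) * x.2) = x.2
    rw [hlead, ← mul_assoc, ← Polynomial.C_mul, inv_mul_cancel₀ hc0, Polynomial.C_1, one_mul]
  · intro V hV
    obtain ⟨hmemr, hdeg⟩ := Finset.mem_filter.mp hV
    obtain ⟨hV0, _⟩ := Finset.mem_erase.mp hmemr
    have hl : V.leadingCoeff ≠ 0 := Polynomial.leadingCoeff_ne_zero.mpr hV0
    show T V = T (Polynomial.C (((if h : V.leadingCoeff = 0 then 1
        else Units.mk0 V.leadingCoeff h : Fqˣ)) : Fq) * (Polynomial.C (V.leadingCoeff)⁻¹ * V))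
    rw [dif_neg hl]
    show T V = T (Polynomial.C V.leadingCoeff * (Polynomial.C (V.leadingCoeff)⁻¹ * V))
    rw [← mul_assoc, ← Polynomial.C_mul, mul_inv_cancel₀ hl, Polynomial.C_1, one_mul]

end Expand2

section Master
set_option linter.unusedSectionVars false

variable {Fq : Type} [Field Fq] [Fintype Fq] {ζ : Fq}
variable (p : ℕ) [Fact p.Prime] [Algebra (ZMod p) Fq]

lemma stratum_small (hq3 : Fintype.card Fq % 3 = 1) (hζ3 : ζ ^ 3 = 1) (hζ1 : ζ ≠ 1)
    {f : Polynomial Fq} (hf : f.Monic) {n m d : ℕ} (hn : n = f.natDegree)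
    (hd : d + m + 2 ≤ n) :
    ∑ c : Fqˣ, ∑ V' ∈ Mdeg Fq d,
      (∑ h ∈ Mdeg Fq m, stdChar Fq p (Lc Fq f (h * (Polynomial.C ((c : Fq)) * V')))) *
        Gq Fq ζ p (Polynomial.C ((c : Fq)) * V') f =
    (Fintype.card Fq : ℂ) ^ m *
      (∑ c : Fqˣ, cubicSym Fq ζ f (Polynomial.C (((c : Fq))⁻¹))) *
      ∑ V' ∈ Mdeg Fq d, Gq Fq ζ p V' f := by
  have key : ∀ (c : Fqˣ), ∀ V' ∈ Mdeg Fq d,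
      (∑ h ∈ Mdeg Fq m, stdChar Fq p (Lc Fq f (h * (Polynomial.C ((c : Fq)) * V')))) *
        Gq Fq ζ p (Polynomial.C ((c : Fq)) * V') f =
      (Fintype.card Fq : ℂ) ^ m *
        (cubicSym Fq ζ f (Polynomial.C (((c : Fq))⁻¹)) * Gq Fq ζ p V' f) := by
    intro c V' hV'
    obtain ⟨hmon, hdeg⟩ := mem_Mdeg.mp hV'
    have hc0 : ((c : Fq)) ≠ 0 := Units.ne_zero _
    have hVdeg : (Polynomial.C ((c : Fq)) * V').degree < ((n - m : ℕ) : WithBot ℕ) := by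
      rw [Polynomial.degree_C_mul hc0, Polynomial.degree_eq_natDegree hmon.ne_zero, hdeg]
      exact_mod_cast (by omega : d < n - m)
    rw [inner_small p hf hn (by omega : m < n) hVdeg, Polynomial.coeff_C_mul,
      Polynomial.coeff_eq_zero_of_natDegree_lt (by rw [hdeg]; omega), mul_zero, stdChar_zero,
      mul_one, Gq_C_mul p hq3 hζ3 hζ1 hf hc0 V']
  calc ∑ c : Fqˣ, ∑ V' ∈ Mdeg Fq d,
      (∑ h ∈ Mdeg Fq m, stdChar Fq p (Lc Fq f (h * (Polynomial.C ((c : Fq)) * V')))) *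
        Gq Fq ζ p (Polynomial.C ((c : Fq)) * V') f
      = ∑ c : Fqˣ, ∑ V' ∈ Mdeg Fq d, (Fintype.card Fq : ℂ) ^ m *
          (cubicSym Fq ζ f (Polynomial.C (((c : Fq))⁻¹)) * Gq Fq ζ p V' f) :=
        Finset.sum_congr rfl fun c _ => Finset.sum_congr rfl fun V' hV' => key c V' hV'
    _ = (Fintype.card Fq : ℂ) ^ m *
          (∑ c : Fqˣ, cubicSym Fq ζ f (Polynomial.C (((c : Fq))⁻¹))) *
          ∑ V' ∈ Mdeg Fq d, Gq Fq ζ p V' f := by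
        simp only [Finset.mul_sum, Finset.sum_mul]
        rw [Finset.sum_comm]
        refine Finset.sum_congr rfl fun V' _ => Finset.sum_congr rfl fun c _ => ?_
        ring

lemma stratum_mid (hq3 : Fintype.card Fq % 3 = 1) (hζ3 : ζ ^ 3 = 1) (hζ1 : ζ ≠ 1)
    {f : Polynomial Fq} (hf : f.Monic) {n m d : ℕ} (hn : n = f.natDegree)
    (hd : d + m + 1 = n) :
    ∑ c : Fqˣ, ∑ V' ∈ Mdeg Fq d,
      (∑ h ∈ Mdeg Fq m, stdChar Fq p (Lc Fq f (h * (Polynomial.C ((c : Fq)) * V')))) *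
        Gq Fq ζ p (Polynomial.C ((c : Fq)) * V') f =
    (Fintype.card Fq : ℂ) ^ m *
      (∑ c : Fqˣ, stdChar Fq p ((c : Fq)) * cubicSym Fq ζ f (Polynomial.C (((c : Fq))⁻¹))) *
      ∑ V' ∈ Mdeg Fq d, Gq Fq ζ p V' f := by
  have key : ∀ (c : Fqˣ), ∀ V' ∈ Mdeg Fq d,
      (∑ h ∈ Mdeg Fq m, stdChar Fq p (Lc Fq f (h * (Polynomial.C ((c : Fq)) * V')))) *
        Gq Fq ζ p (Polynomial.C ((c : Fq)) * V') f =
      (Fintype.card Fq : ℂ) ^ m * (stdChar Fq p ((c : Fq)) *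
        (cubicSym Fq ζ f (Polynomial.C (((c : Fq))⁻¹)) * Gq Fq ζ p V' f)) := by
    intro c V' hV'
    obtain ⟨hmon, hdeg⟩ := mem_Mdeg.mp hV'
    have hc0 : ((c : Fq)) ≠ 0 := Units.ne_zero _
    have hVdeg : (Polynomial.C ((c : Fq)) * V').degree < ((n - m : ℕ) : WithBot ℕ) := by
      rw [Polynomial.degree_C_mul hc0, Polynomial.degree_eq_natDegree hmon.ne_zero, hdeg]
      exact_mod_cast (by omega : d < n - m)
    have hcoeff : V'.coeff (n - m - 1) = 1 := by
      rw [show n - m - 1 = V'.natDegree by rw [hdeg]; omega]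
      exact hmon.coeff_natDegree
    rw [inner_small p hf hn (by omega : m < n) hVdeg, Polynomial.coeff_C_mul, hcoeff,
      mul_one, Gq_C_mul p hq3 hζ3 hζ1 hf hc0 V']
    ring
  calc ∑ c : Fqˣ, ∑ V' ∈ Mdeg Fq d,
      (∑ h ∈ Mdeg Fq m, stdChar Fq p (Lc Fq f (h * (Polynomial.C ((c : Fq)) * V')))) *
        Gq Fq ζ p (Polynomial.C ((c : Fq)) * V') f
      = ∑ c : Fqˣ, ∑ V' ∈ Mdeg Fq d, (Fintype.card Fq : ℂ) ^ m *
          (stdChar Fq p ((c : Fq)) *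
            (cubicSym Fq ζ f (Polynomial.C (((c : Fq))⁻¹)) * Gq Fq ζ p V' f)) :=
        Finset.sum_congr rfl fun c _ => Finset.sum_congr rfl fun V' hV' => key c V' hV'
    _ = (Fintype.card Fq : ℂ) ^ m *
          (∑ c : Fqˣ, stdChar Fq p ((c : Fq)) *
            cubicSym Fq ζ f (Polynomial.C (((c : Fq))⁻¹))) *
          ∑ V' ∈ Mdeg Fq d, Gq Fq ζ p V' f := by
        simp only [Finset.mul_sum, Finset.sum_mul]
        rw [Finset.sum_comm]
        refine Finset.sum_congr rfl fun V' _ => Finset.sum_congr rfl fun c _ => ?_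
        ring

lemma stratum_big (hp : p = ringChar Fq) {f : Polynomial Fq} (hf : f.Monic) {n m d : ℕ}
    (hn : n = f.natDegree) (hn1 : 1 ≤ n) (hm1 : 1 ≤ m) (hdlt : d < n) (hd : n ≤ d + m) :
    ∑ c : Fqˣ, ∑ V' ∈ Mdeg Fq d,
      (∑ h ∈ Mdeg Fq m, stdChar Fq p (Lc Fq f (h * (Polynomial.C ((c : Fq)) * V')))) *
        Gq Fq ζ p (Polynomial.C ((c : Fq)) * V') f = 0 := by
  refine Finset.sum_eq_zero fun c _ => Finset.sum_eq_zero fun V' hV' => ?_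
  obtain ⟨hmon, hdeg⟩ := mem_Mdeg.mp hV'
  have hc0 : ((c : Fq)) ≠ 0 := Units.ne_zero _
  have hV0 : Polynomial.C ((c : Fq)) * V' ≠ 0 := by
    exact mul_ne_zero (by simpa using hc0) hmon.ne_zero
  have hnd : (Polynomial.C ((c : Fq)) * V').natDegree = d := by
    rw [Polynomial.natDegree_C_mul hc0, hdeg]
  rw [inner_zero p hp hf hn hn1 hm1 hV0 (by rw [hnd]; omega) (by rw [hnd]; omega), zero_mul]

end Master

section Master2
set_option linter.unusedSectionVars false

variable {Fq : Type} [Field Fq] [Fintype Fq] {ζ : Fq}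
variable (p : ℕ) [Fact p.Prime] [Algebra (ZMod p) Fq]

/-- The master formula. -/
lemma master (hq3 : Fintype.card Fq % 3 = 1) (hζ3 : ζ ^ 3 = 1) (hζ1 : ζ ≠ 1)
    (hp : p = ringChar Fq) {f : Polynomial Fq} (hf : f.Monic) {n : ℕ} (hn : n = f.natDegree)
    (hn1 : 1 ≤ n) {m : ℕ} (hm1 : 1 ≤ m) :
    ∑ h ∈ Mdeg Fq m, cubicSym Fq ζ f h =
      ((Fintype.card Fq : ℂ) ^ m / (Fintype.card Fq : ℂ) ^ n) *
        cubicSym Fq ζ f (Polynomial.C (-1)) *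
        (Gq Fq ζ p 0 f
          + (∑ c : Fqˣ, cubicSym Fq ζ f (Polynomial.C (((c : Fq))⁻¹))) *
              (∑ V ∈ MdegLEZ Fq ((n : ℤ) - m - 2), Gq Fq ζ p V f)
          + (∑ c : Fqˣ, stdChar Fq p ((c : Fq)) *
                cubicSym Fq ζ f (Polynomial.C (((c : Fq))⁻¹))) *
              (∑ V ∈ MdegZ Fq ((n : ℤ) - m - 1), Gq Fq ζ p V f)) := by
  classical
  have hq0 : (Fintype.card Fq : ℂ) ≠ 0 := Nat.cast_ne_zero.mpr Fintype.card_ne_zero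
  set U := ∑ c : Fqˣ, cubicSym Fq ζ f (Polynomial.C (((c : Fq))⁻¹)) with hU
  set W := ∑ c : Fqˣ, stdChar Fq p ((c : Fq)) *
      cubicSym Fq ζ f (Polynomial.C (((c : Fq))⁻¹)) with hW
  have hnf : f.natDegree = n := hn.symm
  rw [key_expand p hq3 hζ3 hζ1 hp hf (by omega) m, hnf,
    sum_degLT_strat n (fun V => (∑ h ∈ Mdeg Fq m, stdChar Fq p (Lc Fq f (h * V))) *
      Gq Fq ζ p V f)]
  -- the V = 0 term
  have hzero : (∑ h ∈ Mdeg Fq m, stdChar Fq p (Lc Fq f (h * 0))) * Gq Fq ζ p 0 f =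
      (Fintype.card Fq : ℂ) ^ m * Gq Fq ζ p 0 f := by
    rw [inner_of_zero]
  -- the d-strata
  have hstrata : ∑ d ∈ Finset.range n, ∑ c : Fqˣ, ∑ V' ∈ Mdeg Fq d,
      (∑ h ∈ Mdeg Fq m, stdChar Fq p (Lc Fq f (h * (Polynomial.C ((c : Fq)) * V')))) *
        Gq Fq ζ p (Polynomial.C ((c : Fq)) * V') f =
      (Fintype.card Fq : ℂ) ^ m * U * (∑ V ∈ MdegLEZ Fq ((n : ℤ) - m - 2), Gq Fq ζ p V f)
        + (Fintype.card Fq : ℂ) ^ m * W *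
            (∑ V ∈ MdegZ Fq ((n : ℤ) - m - 1), Gq Fq ζ p V f) := by
    have hpt : ∀ d ∈ Finset.range n,
        (∑ c : Fqˣ, ∑ V' ∈ Mdeg Fq d,
          (∑ h ∈ Mdeg Fq m, stdChar Fq p (Lc Fq f (h * (Polynomial.C ((c : Fq)) * V')))) *
            Gq Fq ζ p (Polynomial.C ((c : Fq)) * V') f) =
        (if d + m + 2 ≤ n then
            (Fintype.card Fq : ℂ) ^ m * U * ∑ V' ∈ Mdeg Fq d, Gq Fq ζ p V' f else 0)
          + (if d + m + 1 = n then
            (Fintype.card Fq : ℂ) ^ m * W * ∑ V' ∈ Mdeg Fq d, Gq Fq ζ p V' f else 0) := by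
      intro d hd
      rw [Finset.mem_range] at hd
      by_cases h1 : d + m + 2 ≤ n
      · rw [if_pos h1, if_neg (by omega), add_zero, hU]
        exact stratum_small p hq3 hζ3 hζ1 hf hn h1
      · by_cases h2 : d + m + 1 = n
        · rw [if_neg h1, if_pos h2, zero_add, hW]
          exact stratum_mid p hq3 hζ3 hζ1 hf hn h2
        · rw [if_neg h1, if_neg h2, add_zero]
          exact stratum_big p hp hf hn hn1 hm1 hd (by omega)
    rw [Finset.sum_congr rfl hpt, Finset.sum_add_distrib, ← Finset.sum_filter,
      ← Finset.sum_filter]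
    congr 1
    · -- LE part
      by_cases hc : m + 2 ≤ n
      · have hfil : (Finset.range n).filter (fun d => d + m + 2 ≤ n) =
            Finset.range (n - m - 1) := by
          ext d
          simp only [Finset.mem_filter, Finset.mem_range]
          omega
        rw [hfil, MdegLEZ, if_pos (by omega : (0 : ℤ) ≤ (n : ℤ) - m - 2),
          show ((n : ℤ) - m - 2).toNat = n - m - 2 by omega,
          show n - m - 1 = (n - m - 2) + 1 by omega,
          sum_MdegLE_eq (n - m - 2) (fun V => Gq Fq ζ p V f), Finset.mul_sum]
        rw [Finset.mul_sum]
      · have hfil : (Finset.range n).filter (fun d => d + m + 2 ≤ n) = ∅ := by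
          ext d
          simp only [Finset.mem_filter, Finset.mem_range, Finset.notMem_empty, iff_false]
          omega
        rw [hfil, MdegLEZ, if_neg (by omega : ¬ (0 : ℤ) ≤ (n : ℤ) - m - 2)]
        simp
    · -- EQ part
      by_cases hc : m + 1 ≤ n
      · have hfil : (Finset.range n).filter (fun d => d + m + 1 = n) = {n - m - 1} := by
          ext d
          simp only [Finset.mem_filter, Finset.mem_range, Finset.mem_singleton]
          omega
        rw [hfil, Finset.sum_singleton, MdegZ, if_pos (by omega : (0 : ℤ) ≤ (n : ℤ) - m - 1),
          show ((n : ℤ) - m - 1).toNat = n - m - 1 by omega]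
      · have hfil : (Finset.range n).filter (fun d => d + m + 1 = n) = ∅ := by
          ext d
          simp only [Finset.mem_filter, Finset.mem_range, Finset.notMem_empty, iff_false]
          omega
        rw [hfil, MdegZ, if_neg (by omega : ¬ (0 : ℤ) ≤ (n : ℤ) - m - 1)]
        simp
  rw [hzero, hstrata]
  field_simp
  ring

end Master2
/-- The Poisson summation formula for the cubic residue symbols (Proposition 2.10). -/
theorem statement11 (Fq : Type) [Field Fq] [Fintype Fq]
    (hq : Odd (Fintype.card Fq)) (h3 : Fintype.card Fq % 3 = 1)
    (ζ : Fq) (hζ3 : ζ ^ 3 = 1) (hζ1 : ζ ≠ 1)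
    (p : ℕ) [Fact p.Prime] [Algebra (ZMod p) Fq] (hp : p = ringChar Fq)
    (f : Polynomial Fq) (hf : f.Monic) (n : ℕ) (hn : n = f.natDegree) (hn1 : 1 ≤ n)
    (m : ℕ) (hm : 1 ≤ m) :
    ((3 ∣ n) →
      (∑ h ∈ Mdeg Fq m, cubicSym Fq ζ f h) =
        ((Fintype.card Fq : ℂ) ^ m / (Fintype.card Fq : ℂ) ^ n) *
          (Gq Fq ζ p 0 f +
            ((Fintype.card Fq : ℂ) - 1) *
              (∑ V ∈ MdegLEZ Fq ((n : ℤ) - m - 2), Gq Fq ζ p V f) -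
            ∑ V ∈ MdegZ Fq ((n : ℤ) - m - 1), Gq Fq ζ p V f)) ∧
    (¬ (3 ∣ n) →
      (∑ h ∈ Mdeg Fq m, cubicSym Fq ζ f h) =
        ((Fintype.card Fq : ℂ) ^ m * (Real.sqrt (Fintype.card Fq : ℝ) : ℂ) /
            (Fintype.card Fq : ℂ) ^ n) *
          (starRingEnd ℂ)
            (((Real.sqrt (Fintype.card Fq : ℝ) : ℂ))⁻¹ *
              ∑ c : Fqˣ, cubicSym Fq ζ f (Polynomial.C (c : Fq)) * stdChar Fq p (c : Fq)) *
          ∑ V ∈ MdegZ Fq ((n : ℤ) - m - 1), Gq Fq ζ p V f) := by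
  classical
  have hm1ne : (-1 : Fq) ≠ 0 := neg_ne_zero.mpr one_ne_zero
  constructor
  · -- case 3 ∣ n
    intro h3n
    have h3nf : 3 ∣ f.natDegree := by rw [← hn]; exact h3n
    rw [master p h3 hζ3 hζ1 hp hf hn hn1 hm]
    have hone : cubicSym Fq ζ f (Polynomial.C (-1 : Fq)) = 1 :=
      cubicSym_C_of_three_dvd h3 hζ3 hζ1 hf h3nf hm1ne
    have hU : (∑ c : Fqˣ, cubicSym Fq ζ f (Polynomial.C (((c : Fq))⁻¹))) =
        (Fintype.card Fq : ℂ) - 1 := by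
      have hterm : ∀ c : Fqˣ, cubicSym Fq ζ f (Polynomial.C (((c : Fq))⁻¹)) = 1 :=
        fun c => cubicSym_C_of_three_dvd h3 hζ3 hζ1 hf h3nf (inv_ne_zero (Units.ne_zero c))
      rw [Finset.sum_congr rfl fun c _ => hterm c, Finset.sum_const, Finset.card_univ,
        Fintype.card_units, nsmul_eq_mul, mul_one]
      have hq1 : 1 ≤ Fintype.card Fq := Fintype.card_pos
      push_cast [Nat.cast_sub hq1]
      ring
    have hW : (∑ c : Fqˣ, stdChar Fq p ((c : Fq)) *
        cubicSym Fq ζ f (Polynomial.C (((c : Fq))⁻¹))) = -1 := by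
      have hterm : ∀ c : Fqˣ, stdChar Fq p ((c : Fq)) *
          cubicSym Fq ζ f (Polynomial.C (((c : Fq))⁻¹)) = stdChar Fq p ((c : Fq)) := by
        intro c
        rw [cubicSym_C_of_three_dvd h3 hζ3 hζ1 hf h3nf (inv_ne_zero (Units.ne_zero c)),
          mul_one]
      rw [Finset.sum_congr rfl fun c _ => hterm c]
      exact sum_units_stdChar p hp
    rw [hone, hU, hW]
    ring
  · -- case 3 ∤ n
    intro h3n
    have hndvd : ¬ 3 ∣ f.natDegree := by rw [← hn]; exact h3n
    rw [master p h3 hζ3 hζ1 hp hf hn hn1 hm]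
    have hG0 : Gq Fq ζ p 0 f = 0 := Gq_zero_eq_zero p h3 hζ3 hζ1 hf hndvd
    have hU : (∑ c : Fqˣ, cubicSym Fq ζ f (Polynomial.C (((c : Fq))⁻¹))) = 0 := by
      have heq : (∑ c : Fqˣ, cubicSym Fq ζ f (Polynomial.C (((c : Fq))⁻¹))) =
          ∑ c : Fqˣ, cubicSym Fq ζ f (Polynomial.C ((c : Fq))) := by
        refine Fintype.sum_equiv (Equiv.inv Fqˣ) _ _ fun c => ?_
        congr 2
        show ((c : Fq))⁻¹ = (((c⁻¹ : Fqˣ)) : Fq)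
        simp
      rw [heq]
      exact sum_cubicSym_C_eq_zero h3 hζ3 hζ1 hf hndvd
    have hWτ : cubicSym Fq ζ f (Polynomial.C (-1 : Fq)) *
        (∑ c : Fqˣ, stdChar Fq p ((c : Fq)) *
          cubicSym Fq ζ f (Polynomial.C (((c : Fq))⁻¹))) =
        (starRingEnd ℂ)
          (∑ c : Fqˣ, cubicSym Fq ζ f (Polynomial.C ((c : Fq))) * stdChar Fq p ((c : Fq))) := by
      rw [map_sum, Finset.mul_sum]
      refine Fintype.sum_equiv (Equiv.neg Fqˣ) _ _ fun b => ?_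
      show cubicSym Fq ζ f (Polynomial.C (-1 : Fq)) *
          (stdChar Fq p ((b : Fq)) * cubicSym Fq ζ f (Polynomial.C (((b : Fq))⁻¹))) =
        (starRingEnd ℂ)
          (cubicSym Fq ζ f (Polynomial.C (((-b : Fqˣ) : Fq))) *
            stdChar Fq p (((-b : Fqˣ) : Fq)))
      have hb : ((-b : Fqˣ) : Fq) = -((b : Fq)) := by simp
      have hbne : -((b : Fq)) ≠ 0 := neg_ne_zero.mpr (Units.ne_zero b)
      rw [hb, map_mul, ← cubicSym_C_inv_eq_conj h3 hζ3 hζ1 hf hbne, conj_stdChar, neg_neg,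
        show (-((b : Fq)))⁻¹ = (-1 : Fq) * ((b : Fq))⁻¹ by
          rw [inv_neg]; ring,
        Polynomial.C_mul, cubicSym_C_mul h3 hζ3 hζ1 f hm1ne]
      ring
    rw [hG0, hU]
    have hsq : ((Real.sqrt (Fintype.card Fq : ℝ) : ℂ)) ≠ 0 := by
      have hqpos : (0 : ℝ) < (Fintype.card Fq : ℝ) := by
        exact_mod_cast Fintype.card_pos
      simp only [Ne, Complex.ofReal_eq_zero]
      exact ne_of_gt (Real.sqrt_pos.mpr hqpos)
    have hq0 : (Fintype.card Fq : ℂ) ≠ 0 := Nat.cast_ne_zero.mpr Fintype.card_ne_zero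
    rw [map_mul, map_inv₀, Complex.conj_ofReal, ← hWτ]
    field_simp
    ring
end CubicLF
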